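/- arXiv:2407.03675 — 4 statements merged into one kernel-verified Lean document; each statement's English description precedes it below -/
import Mathlib

section
/- Let R be a half-open cube in ℝ^d and E ⊆ ℝ^d a nonempty set whose closure has Lebesgue measure zero. Let 𝒟(R,E) be the family of dyadic subcubes of R intersecting E, and ℱ(R,E) the family of maximal dyadic subcubes Q' of R with Q' ∩ E = ∅ but πQ' ∩ E ≠ ∅ (where πQ' is the dyadic parent). Then ∑_{Q ∈ 𝒟(R,E)} |Q| = ∑_{Q' ∈ ℱ(R,E)} |Q'| · log₂(ℓ(R)/ℓ(Q')), where |·| denotes Lebesgue measure and ℓ(·) side length. -/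
open MeasureTheory Metric

/-- A half-open axis-parallel cube in `ℝ^d`: `[a₁, a₁+l) × ⋯ × [a_d, a_d+l)`. -/
structure Cube (d : ℕ) where
  a : Fin d → ℝ
  l : ℝ
  l_pos : 0 < l

/-- The underlying point set of a cube. -/
def Cube.set {d : ℕ} (Q : Cube d) : Set (EuclideanSpace ℝ (Fin d)) :=
  {x | ∀ i, Q.a i ≤ x i ∧ x i < Q.a i + Q.l}

/-- `Q` is a dyadic subcube of `R`: a member of `𝒟_j(R)` for some `j ≥ 0`. -/
def IsDyadicSubcube {d : ℕ} (R Q : Cube d) : Prop :=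
  ∃ j : ℕ, ∃ k : Fin d → ℕ, (∀ i, k i < 2 ^ j) ∧ Q.l = R.l / 2 ^ j ∧
    ∀ i, Q.a i = R.a i + (k i : ℝ) * (R.l / 2 ^ j)

/-- `Q' ∈ ℱ(R,E)`: a maximal dyadic subcube of `R` avoiding `E`, i.e.
`Q' ∩ E = ∅` and its dyadic parent `πQ'` meets `E`. -/
def IsMaxEmpty {d : ℕ} (R : Cube d) (E : Set (EuclideanSpace ℝ (Fin d))) (Q' : Cube d) : Prop :=
  IsDyadicSubcube R Q' ∧ Q'.set ∩ E = ∅ ∧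
    ∃ P : Cube d, IsDyadicSubcube R P ∧ P.l = 2 * Q'.l ∧ Q'.set ⊆ P.set ∧ (P.set ∩ E).Nonempty

/-- `M = M(R)`: a largest dyadic subcube of `R` containing no point of `E`. -/
def IsLargestEmptyDyadic {d : ℕ} (R : Cube d) (E : Set (EuclideanSpace ℝ (Fin d)))
    (M : Cube d) : Prop :=
  IsDyadicSubcube R M ∧ M.set ∩ E = ∅ ∧
    ∀ Q : Cube d, IsDyadicSubcube R Q → Q.set ∩ E = ∅ → Q.l ≤ M.l

/-- Weak porosity of `E ⊆ ℝ^d`. -/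
def WeaklyPorous {d : ℕ} (E : Set (EuclideanSpace ℝ (Fin d))) : Prop :=
  ∃ c δ : ℝ, 0 < c ∧ c < 1 ∧ 0 < δ ∧ δ < 1 ∧
    ∀ R : Cube d, ∃ M : Cube d, IsLargestEmptyDyadic R E M ∧
      ∃ F : Finset (Cube d),
        (↑F : Set (Cube d)).Pairwise (fun Q Q' => Disjoint Q.set Q'.set) ∧
        (∀ Q ∈ F, IsDyadicSubcube R Q ∧ Q.set ∩ E = ∅ ∧
          ENNReal.ofReal δ * volume M.set ≤ volume Q.set) ∧
        ENNReal.ofReal c * volume R.set ≤ ∑ Q ∈ F, volume Q.set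


open scoped ENNReal

theorem Cube.ext' {d : ℕ} {Q Q' : Cube d} (ha : Q.a = Q'.a) (hl : Q.l = Q'.l) : Q = Q' := by
  cases Q; cases Q'; simp_all

theorem Cube.set_eq {d : ℕ} (Q : Cube d) :
    Q.set = (MeasurableEquiv.toLp 2 (Fin d → ℝ)).symm ⁻¹'
      (Set.univ.pi fun i => Set.Ico (Q.a i) (Q.a i + Q.l)) := by
  ext x; simp [Cube.set, Set.mem_pi, MeasurableEquiv.toLp]; rfl

theorem Cube.measurable_set {d : ℕ} (Q : Cube d) : MeasurableSet Q.set := by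
  rw [Cube.set_eq]
  exact (MeasurableEquiv.measurable _) (MeasurableSet.univ_pi fun i => measurableSet_Ico)

theorem Cube.volume_set {d : ℕ} (Q : Cube d) :
    volume Q.set = ENNReal.ofReal (Q.l ^ d) := by
  rw [Cube.set_eq,
    (EuclideanSpace.volume_preserving_symm_measurableEquiv_toLp (Fin d)).measure_preimage
      ((MeasurableSet.univ_pi fun i => measurableSet_Ico).nullMeasurableSet)]
  rw [volume_pi_pi]
  simp [Real.volume_Ico, ENNReal.ofReal_pow Q.l_pos.le]

noncomputable def gc {d : ℕ} (R : Cube d) (j : ℕ) (k : Fin d → ℕ) : Cube d where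
  a := fun i => R.a i + k i * (R.l / 2 ^ j)
  l := R.l / 2 ^ j
  l_pos := div_pos R.l_pos (by positivity)

theorem mem_gc_iff {d : ℕ} (R : Cube d) (j : ℕ) (k : Fin d → ℕ)
    (x : EuclideanSpace ℝ (Fin d)) :
    x ∈ (gc R j k).set ↔ ∀ i, ⌊(x i - R.a i) / (R.l / 2 ^ j)⌋ = (k i : ℤ) := by
  have hs : (0:ℝ) < R.l / 2 ^ j := div_pos R.l_pos (by positivity)
  unfold Cube.set gc
  simp only [Set.mem_setOf_eq]
  refine forall_congr' fun i => ?_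
  rw [Int.floor_eq_iff]
  push_cast
  constructor
  · rintro ⟨h1, h2⟩
    constructor
    · rw [le_div_iff₀ hs]; linarith
    · rw [div_lt_iff₀ hs]; ring_nf; ring_nf at h2; linarith
  · rintro ⟨h1, h2⟩
    rw [le_div_iff₀ hs] at h1
    rw [div_lt_iff₀ hs] at h2
    constructor <;> nlinarith

theorem gc_disjoint {d : ℕ} (R : Cube d) (j : ℕ) {k k' : Fin d → ℕ}
    (h : k ≠ k') : Disjoint (gc R j k).set (gc R j k').set := by
  rw [Set.disjoint_left]
  intro x hx hx'
  rw [mem_gc_iff] at hx hx'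
  exact h (funext fun i => Nat.cast_injective ((hx i).symm.trans (hx' i)))

theorem gc_child_subset {d : ℕ} (R : Cube d) (j : ℕ) (k : Fin d → ℕ) :
    (gc R (j+1) k).set ⊆ (gc R j (fun i => k i / 2)).set := by
  intro x hx i
  have hs : (0:ℝ) < R.l / 2 ^ (j+1) := div_pos R.l_pos (by positivity)
  have hx' := hx i
  unfold Cube.set gc at *
  simp only [Set.mem_setOf_eq] at *
  have h2 : R.l / 2 ^ j = 2 * (R.l / 2 ^ (j+1)) := by
    rw [pow_succ]; ring
  have hb : (k i / 2) * 2 ≤ k i ∧ k i < (k i / 2) * 2 + 2 := by omega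
  have hb1 : ((k i / 2 : ℕ) : ℝ) * 2 ≤ (k i : ℝ) := by exact_mod_cast hb.1
  have hb2 : (k i : ℝ) < ((k i / 2 : ℕ) : ℝ) * 2 + 2 := by exact_mod_cast hb.2
  have hb2' : (k i : ℝ) + 1 ≤ ((k i / 2 : ℕ) : ℝ) * 2 + 2 := by
    have : k i + 1 ≤ (k i / 2) * 2 + 2 := hb.2
    exact_mod_cast this
  rw [h2]
  constructor
  · nlinarith [hx'.1]
  · nlinarith [hx'.2, mul_le_mul_of_nonneg_right hb2' hs.le]

noncomputable def gcF {d : ℕ} (R : Cube d) (j : ℕ) (k : Fin d → Fin (2 ^ j)) : Cube d :=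
  gc R j (fun i => k i)

theorem dyadic_iff {d : ℕ} (R Q : Cube d) :
    IsDyadicSubcube R Q ↔ ∃ j : ℕ, ∃ k : Fin d → Fin (2 ^ j), Q = gcF R j k := by
  constructor
  · rintro ⟨j, k, hk, hl, ha⟩
    exact ⟨j, fun i => ⟨k i, hk i⟩, Cube.ext' (funext ha) hl⟩
  · rintro ⟨j, k, rfl⟩
    exact ⟨j, fun i => k i, fun i => (k i).2, rfl, fun i => rfl⟩

theorem gcF_injective {d : ℕ} (R : Cube d) :
    Function.Injective (fun i : Σ j : ℕ, Fin d → Fin (2 ^ j) => gcF R i.1 i.2) := by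
  rintro ⟨j, k⟩ ⟨j', k'⟩ h
  simp only at h
  have hl : R.l / 2 ^ j = R.l / 2 ^ j' := congrArg Cube.l h
  have hj : j = j' := by
    have h2 : R.l * (2:ℝ) ^ j' = R.l * 2 ^ j := by
      rw [div_eq_div_iff (by positivity) (by positivity)] at hl
      linarith [hl]
    have h3 : (2:ℝ) ^ j' = 2 ^ j := mul_left_cancel₀ (ne_of_gt R.l_pos) h2
    have h4 : (2:ℕ) ^ j = (2:ℕ) ^ j' := by
      have : (((2:ℕ) ^ j : ℕ) : ℝ) = (((2:ℕ) ^ j' : ℕ) : ℝ) := by push_cast; linarith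
      exact_mod_cast this
    exact Nat.pow_right_injective le_rfl h4
  subst hj
  have hs : (0:ℝ) < R.l / 2 ^ j := div_pos R.l_pos (by positivity)
  have ha : ∀ i, R.a i + ((k i : ℕ) : ℝ) * (R.l / 2 ^ j) = R.a i + ((k' i : ℕ) : ℝ) * (R.l / 2 ^ j) :=
    fun i => congrFun (congrArg Cube.a h) i
  have : k = k' := by
    funext i
    have h5 : ((k i : ℕ) : ℝ) = ((k' i : ℕ) : ℝ) :=
      mul_right_cancel₀ (ne_of_gt hs) (by linarith [ha i])
    exact Fin.ext (Nat.cast_injective h5)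
  simp [this]

open Classical in
theorem tsum_dyadic {d : ℕ} (R : Cube d) (p : Cube d → Prop) (f : Cube d → ℝ≥0∞) :
    ∑' Q : {Q : Cube d // IsDyadicSubcube R Q ∧ p Q}, f Q.1
      = ∑' j : ℕ, ∑ k : Fin d → Fin (2 ^ j),
          if p (gcF R j k) then f (gcF R j k) else 0 := by
  classical
  set e : (Σ j : ℕ, Fin d → Fin (2 ^ j)) → Cube d := fun i => gcF R i.1 i.2 with he
  have hbij : Function.Bijective
      (fun i : {i : Σ j : ℕ, Fin d → Fin (2 ^ j) // p (e i)} =>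
        (⟨e i.1, (dyadic_iff R _).2 ⟨i.1.1, i.1.2, rfl⟩, i.2⟩ :
          {Q : Cube d // IsDyadicSubcube R Q ∧ p Q})) := by
    constructor
    · rintro ⟨i, hi⟩ ⟨i', hi'⟩ h
      simp only [Subtype.mk.injEq] at h
      exact Subtype.ext (gcF_injective R h)
    · rintro ⟨Q, hQ, hp⟩
      obtain ⟨j, k, rfl⟩ := (dyadic_iff R Q).1 hQ
      exact ⟨⟨⟨j, k⟩, hp⟩, rfl⟩
  rw [← Equiv.tsum_eq (Equiv.ofBijective _ hbij) (fun Q => f Q.1)]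
  calc ∑' (c : {i : Σ j : ℕ, Fin d → Fin (2 ^ j) // p (e i)}), f (e c.1)
      = ∑' i, Set.indicator {i | p (e i)} (fun i => f (e i)) i := by exact tsum_subtype {i | p (e i)} (fun i => f (e i))
    _ = ∑' i : Σ j : ℕ, Fin d → Fin (2 ^ j), if p (e i) then f (e i) else 0 := by
        apply tsum_congr; intro i
        by_cases h : p (e i) <;> simp [Set.indicator_apply, h]
    _ = ∑' j : ℕ, ∑' k : Fin d → Fin (2 ^ j), if p (e ⟨j, k⟩) then f (e ⟨j, k⟩) else 0 :=
        ENNReal.tsum_sigma' _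
    _ = _ := by
        apply tsum_congr; intro j; rw [tsum_fintype]


noncomputable def Cube.corner {d : ℕ} (Q : Cube d) : EuclideanSpace ℝ (Fin d) := WithLp.toLp 2 Q.a

theorem Cube.corner_mem {d : ℕ} (Q : Cube d) : Q.corner ∈ Q.set :=
  fun i => ⟨le_refl _, lt_add_of_pos_right _ Q.l_pos⟩

theorem level_inj {d : ℕ} (R : Cube d) {m m' : ℕ} (h : R.l / 2 ^ m = R.l / 2 ^ m') :
    m = m' := by
  have h2 : R.l * (2:ℝ) ^ m' = R.l * 2 ^ m := by
    rw [div_eq_div_iff (by positivity) (by positivity)] at h; linarith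
  have h3 : (2:ℝ) ^ m' = 2 ^ m := mul_left_cancel₀ (ne_of_gt R.l_pos) h2
  have h4 : (2:ℕ) ^ m = (2:ℕ) ^ m' := by
    have : (((2:ℕ) ^ m : ℕ) : ℝ) = (((2:ℕ) ^ m' : ℕ) : ℝ) := by push_cast; linarith
    exact_mod_cast this
  exact Nat.pow_right_injective le_rfl h4

def pk {d j : ℕ} (k : Fin d → Fin (2 ^ (j + 1))) : Fin d → Fin (2 ^ j) :=
  fun i => ⟨(k i : ℕ) / 2, by
    have h2 : (k i : ℕ) < 2 ^ j * 2 := by rw [← pow_succ]; exact (k i).2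
    omega⟩

theorem level_succ {d : ℕ} (R : Cube d) (j : ℕ) :
    R.l / 2 ^ j = 2 * (R.l / 2 ^ (j + 1)) := by rw [pow_succ]; ring

theorem gcF_child_subset {d : ℕ} (R : Cube d) (j : ℕ) (k : Fin d → Fin (2 ^ (j + 1))) :
    (gcF R (j + 1) k).set ⊆ (gcF R j (pk k)).set :=
  gc_child_subset R j (fun i => (k i : ℕ))

theorem maxEmpty_iff {d : ℕ} (R : Cube d) (E : Set (EuclideanSpace ℝ (Fin d))) (j : ℕ)
    (k : Fin d → Fin (2 ^ (j + 1))) :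
    IsMaxEmpty R E (gcF R (j + 1) k) ↔
      (gcF R (j + 1) k).set ∩ E = ∅ ∧ ((gcF R j (pk k)).set ∩ E).Nonempty := by
  constructor
  · rintro ⟨_, hemp, P, hPdy, hPl, hsub, hPE⟩
    refine ⟨hemp, ?_⟩
    obtain ⟨m, k'', rfl⟩ := (dyadic_iff R P).1 hPdy
    have hl' : R.l / 2 ^ m = R.l / 2 ^ j := by
      have : (gcF R m k'').l = 2 * (gcF R (j + 1) k).l := hPl
      rw [show (gcF R m k'').l = R.l / 2 ^ m from rfl,
        show (gcF R (j + 1) k).l = R.l / 2 ^ (j + 1) from rfl] at this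
      rw [this]; exact (level_succ R j).symm
    have hm : m = j := level_inj R hl'
    subst hm
    have hx1 : (gcF R (m + 1) k).corner ∈ (gcF R (m + 1) k).set := Cube.corner_mem _
    have hxP := hsub hx1
    have hxpar := gcF_child_subset R m k hx1
    have hfn : (fun i => ((k'' i : ℕ))) = fun i => ((k i : ℕ) / 2) := by
      by_contra hne
      exact (Set.disjoint_left.1 (gc_disjoint R m hne) hxP) hxpar
    have hkk : k'' = pk k := funext fun i => Fin.ext (congrFun hfn i)
    exact hkk ▸ hPE
  · rintro ⟨hemp, hne⟩
    exact ⟨(dyadic_iff R _).2 ⟨j + 1, k, rfl⟩, hemp, gcF R j (pk k),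
      (dyadic_iff R _).2 ⟨j, pk k, rfl⟩, level_succ R j, gcF_child_subset R j k, hne⟩


open Classical in
noncomputable def Sj {d : ℕ} (R : Cube d) (E : Set (EuclideanSpace ℝ (Fin d))) (j : ℕ) : ℝ≥0∞ :=
  ∑ k : Fin d → Fin (2 ^ j),
    if ((gcF R j k).set ∩ E).Nonempty then volume (gcF R j k).set else 0

open Classical in
noncomputable def Fj {d : ℕ} (R : Cube d) (E : Set (EuclideanSpace ℝ (Fin d))) (j : ℕ) : ℝ≥0∞ :=
  ∑ k : Fin d → Fin (2 ^ j),
    if IsMaxEmpty R E (gcF R j k) then volume (gcF R j k).set else 0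

def psi {d j : ℕ} : ((Fin d → Fin (2 ^ j)) × (Fin d → Fin 2)) ≃ (Fin d → Fin (2 ^ (j + 1))) where
  toFun p := fun i => ⟨2 * (p.1 i : ℕ) + (p.2 i : ℕ), by
    have h1 := (p.1 i).2
    have h2 := (p.2 i).2
    have h3 : 2 * (p.1 i : ℕ) + (p.2 i : ℕ) < 2 ^ j * 2 := by omega
    rwa [← pow_succ] at h3⟩
  invFun k := (pk k, fun i => ⟨(k i : ℕ) % 2, Nat.mod_lt _ (by norm_num)⟩)
  left_inv p := Prod.ext
    (funext fun i => Fin.ext (show (2 * (p.1 i : ℕ) + (p.2 i : ℕ)) / 2 = p.1 i by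
      have := (p.2 i).2; omega))
    (funext fun i => Fin.ext (show (2 * (p.1 i : ℕ) + (p.2 i : ℕ)) % 2 = p.2 i by
      have := (p.2 i).2; omega))
  right_inv k := funext fun i => Fin.ext
    (show 2 * ((k i : ℕ) / 2) + (k i : ℕ) % 2 = k i by omega)

theorem pk_psi {d j : ℕ} (p : (Fin d → Fin (2 ^ j)) × (Fin d → Fin 2)) :
    pk (psi p) = p.1 :=
  funext fun i => Fin.ext (show (2 * (p.1 i : ℕ) + (p.2 i : ℕ)) / 2 = p.1 i by
    have := (p.2 i).2; omega)

theorem vol_scale {d : ℕ} (R : Cube d) (j : ℕ) :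
    ENNReal.ofReal ((R.l / 2 ^ j) ^ d) =
      (2 : ℝ≥0∞) ^ d * ENNReal.ofReal ((R.l / 2 ^ (j + 1)) ^ d) := by
  rw [level_succ R j, mul_pow, ENNReal.ofReal_mul (by positivity)]
  congr 1
  rw [ENNReal.ofReal_pow (by norm_num)]
  norm_num

theorem S_rec {d : ℕ} (R : Cube d) (E : Set (EuclideanSpace ℝ (Fin d))) (j : ℕ) :
    Sj R E j = Sj R E (j + 1) + Fj R E (j + 1) := by
  classical
  have hv : ∀ (j : ℕ) (k : Fin d → Fin (2 ^ j)),
      volume (gcF R j k).set = ENNReal.ofReal ((R.l / 2 ^ j) ^ d) :=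
    fun j k => Cube.volume_set _
  unfold Sj Fj
  simp only [hv]
  rw [← Finset.sum_add_distrib]
  have key : ∀ k' : Fin d → Fin (2 ^ (j + 1)),
      ((if ((gcF R (j+1) k').set ∩ E).Nonempty then ENNReal.ofReal ((R.l / 2 ^ (j+1)) ^ d) else 0)
        + (if IsMaxEmpty R E (gcF R (j+1) k') then ENNReal.ofReal ((R.l / 2 ^ (j+1)) ^ d) else 0))
      = (if ((gcF R j (pk k')).set ∩ E).Nonempty then ENNReal.ofReal ((R.l / 2 ^ (j+1)) ^ d)
          else 0) := by
    intro k'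
    by_cases h1 : ((gcF R (j+1) k').set ∩ E).Nonempty
    · have hpar : ((gcF R j (pk k')).set ∩ E).Nonempty := by
        obtain ⟨x, hx1, hx2⟩ := h1
        exact ⟨x, gcF_child_subset R j k' hx1, hx2⟩
      have hnm : ¬ IsMaxEmpty R E (gcF R (j+1) k') := by
        rw [maxEmpty_iff]
        rintro ⟨he, -⟩
        exact Set.not_nonempty_empty (he ▸ h1)
      simp [h1, hpar, hnm]
    · have he : (gcF R (j+1) k').set ∩ E = ∅ := Set.not_nonempty_iff_eq_empty.1 h1
      by_cases h2 : ((gcF R j (pk k')).set ∩ E).Nonempty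
      · have hm : IsMaxEmpty R E (gcF R (j+1) k') := (maxEmpty_iff R E j k').2 ⟨he, h2⟩
        simp [h1, h2, hm]
      · have hnm : ¬ IsMaxEmpty R E (gcF R (j+1) k') := by
          rw [maxEmpty_iff]
          rintro ⟨-, h⟩
          exact h2 h
        simp [h1, h2, hnm]
  rw [Finset.sum_congr rfl (fun k' _ => key k')]
  rw [← Equiv.sum_comp (psi (d := d) (j := j))
    (fun k' => if ((gcF R j (pk k')).set ∩ E).Nonempty
      then ENNReal.ofReal ((R.l / 2 ^ (j+1)) ^ d) else 0)]
  simp only [pk_psi]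
  rw [Fintype.sum_prod_type]
  have hcard : Fintype.card (Fin d → Fin 2) = 2 ^ d := by simp
  apply Finset.sum_congr rfl
  intro k _
  have step : (∑ _y : Fin d → Fin 2,
      (if ((gcF R j k).set ∩ E).Nonempty then ENNReal.ofReal ((R.l / 2 ^ (j+1)) ^ d) else 0))
      = (2 ^ d : ℕ) • (if ((gcF R j k).set ∩ E).Nonempty
          then ENNReal.ofReal ((R.l / 2 ^ (j+1)) ^ d) else 0) := by
    rw [Finset.sum_const, Finset.card_univ, hcard]
  rw [show (∑ y : Fin d → Fin 2,
      if ((gcF R j (k, y).1).set ∩ E).Nonempty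
        then ENNReal.ofReal ((R.l / 2 ^ (j+1)) ^ d) else 0)
      = (2 ^ d : ℕ) • (if ((gcF R j k).set ∩ E).Nonempty
          then ENNReal.ofReal ((R.l / 2 ^ (j+1)) ^ d) else 0) from step]
  by_cases h : ((gcF R j k).set ∩ E).Nonempty
  · simp only [h, if_true, vol_scale R j, nsmul_eq_mul]
    push_cast
    ring
  · simp [h]


open Classical in
noncomputable def tset {d : ℕ} (R : Cube d) (E : Set (EuclideanSpace ℝ (Fin d))) (j : ℕ)
    (k : Fin d → Fin (2 ^ j)) : Set (EuclideanSpace ℝ (Fin d)) :=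
  if ((gcF R j k).set ∩ E).Nonempty then (gcF R j k).set else ∅

noncomputable def AA {d : ℕ} (R : Cube d) (E : Set (EuclideanSpace ℝ (Fin d))) (j : ℕ) :
    Set (EuclideanSpace ℝ (Fin d)) :=
  ⋃ k : Fin d → Fin (2 ^ j), tset R E j k

theorem tset_measurable {d : ℕ} (R : Cube d) (E : Set (EuclideanSpace ℝ (Fin d))) (j : ℕ)
    (k : Fin d → Fin (2 ^ j)) : MeasurableSet (tset R E j k) := by
  unfold tset
  split
  · exact Cube.measurable_set _
  · exact MeasurableSet.empty

theorem AA_measurable {d : ℕ} (R : Cube d) (E : Set (EuclideanSpace ℝ (Fin d))) (j : ℕ) :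
    MeasurableSet (AA R E j) :=
  MeasurableSet.iUnion fun k => tset_measurable R E j k

theorem volume_AA {d : ℕ} (R : Cube d) (E : Set (EuclideanSpace ℝ (Fin d))) (j : ℕ) :
    volume (AA R E j) = Sj R E j := by
  classical
  rw [AA, measure_iUnion ?_ (fun k => tset_measurable R E j k), tsum_fintype]
  · unfold Sj tset
    apply Finset.sum_congr rfl
    intro k _
    split <;> simp
  · intro k k' hne
    simp only [Function.onFun]
    unfold tset
    split
    · split
      · apply gc_disjoint
        intro hcontra
        exact hne (funext fun i => Fin.ext (congrFun hcontra i))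
      · simp
    · simp

theorem AA_antitone_succ {d : ℕ} (R : Cube d) (E : Set (EuclideanSpace ℝ (Fin d))) (j : ℕ) :
    AA R E (j + 1) ⊆ AA R E j := by
  intro x hx
  simp only [AA, Set.mem_iUnion] at hx ⊢
  obtain ⟨k, hk⟩ := hx
  unfold tset at hk
  split at hk
  case isTrue h =>
    refine ⟨pk k, ?_⟩
    have hpar : ((gcF R j (pk k)).set ∩ E).Nonempty := by
      obtain ⟨y, hy1, hy2⟩ := h
      exact ⟨y, gcF_child_subset R j k hy1, hy2⟩
    rw [tset, if_pos hpar]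
    exact gcF_child_subset R j k hk
  case isFalse h => exact absurd hk (Set.notMem_empty x)

theorem dist_le_of_mem_gc {d : ℕ} (R : Cube d) (j : ℕ) (k : Fin d → Fin (2 ^ j))
    {x y : EuclideanSpace ℝ (Fin d)} (hx : x ∈ (gcF R j k).set) (hy : y ∈ (gcF R j k).set) :
    dist x y ≤ R.l / 2 ^ j * Real.sqrt d := by
  have hs : (0:ℝ) < R.l / 2 ^ j := div_pos R.l_pos (by positivity)
  rw [EuclideanSpace.dist_eq]
  have hbd : ∀ i, dist (x i) (y i) ^ 2 ≤ (R.l / 2 ^ j) ^ 2 := by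
    intro i
    have h1 := hx i
    have h2 := hy i
    have : |x i - y i| ≤ R.l / 2 ^ j := by
      rw [abs_le]
      unfold Cube.set gcF gc at h1 h2
      simp only [Set.mem_setOf_eq] at h1 h2
      constructor <;> linarith [h1.1, h1.2, h2.1, h2.2]
    calc dist (x i) (y i) ^ 2 = |x i - y i| ^ 2 := by rw [Real.dist_eq, sq_abs]
      _ ≤ (R.l / 2 ^ j) ^ 2 := by nlinarith [abs_nonneg (x i - y i)]
  calc Real.sqrt (∑ i, dist (x i) (y i) ^ 2)
      ≤ Real.sqrt (∑ _i : Fin d, (R.l / 2 ^ j) ^ 2) :=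
        Real.sqrt_le_sqrt (Finset.sum_le_sum fun i _ => hbd i)
    _ = R.l / 2 ^ j * Real.sqrt d := by
        rw [Finset.sum_const, Finset.card_univ, Fintype.card_fin, nsmul_eq_mul,
          Real.sqrt_mul (by positivity), Real.sqrt_sq hs.le]
        ring

theorem iInter_AA_subset_closure {d : ℕ} (R : Cube d) (E : Set (EuclideanSpace ℝ (Fin d))) :
    (⋂ j, AA R E j) ⊆ closure E := by
  intro x hx
  rw [Metric.mem_closure_iff]
  intro ε hε
  have h0 : Filter.Tendsto (fun j : ℕ => (R.l * Real.sqrt d) * (1/2:ℝ) ^ j)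
      Filter.atTop (nhds 0) := by
    simpa using (tendsto_pow_atTop_nhds_zero_of_lt_one (by norm_num : (0:ℝ) ≤ 1/2)
      (by norm_num : (1/2:ℝ) < 1)).const_mul (R.l * Real.sqrt d)
  have hev : ∀ᶠ j : ℕ in Filter.atTop, (R.l * Real.sqrt d) * (1/2:ℝ) ^ j < ε :=
    h0.eventually (gt_mem_nhds hε)
  obtain ⟨j, hj⟩ := hev.exists
  have hxj : x ∈ AA R E j := Set.mem_iInter.1 hx j
  simp only [AA, Set.mem_iUnion] at hxj
  obtain ⟨k, hk⟩ := hxj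
  unfold tset at hk
  split at hk
  case isTrue h =>
    obtain ⟨y, hy1, hy2⟩ := h
    refine ⟨y, hy2, ?_⟩
    calc dist x y ≤ R.l / 2 ^ j * Real.sqrt d := dist_le_of_mem_gc R j k hk hy1
      _ = (R.l * Real.sqrt d) * (1/2:ℝ) ^ j := by rw [div_pow, one_pow]; ring
      _ < ε := hj
  case isFalse h => exact absurd hk (Set.notMem_empty x)


theorem Sj_ne_top {d : ℕ} (R : Cube d) (E : Set (EuclideanSpace ℝ (Fin d))) (j : ℕ) :
    Sj R E j ≠ ∞ := by
  classical
  unfold Sj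
  refine (ENNReal.sum_lt_top.2 fun k _ => ?_).ne
  split
  · rw [Cube.volume_set]; exact ENNReal.ofReal_lt_top
  · exact ENNReal.zero_lt_top

theorem Sj_tendsto {d : ℕ} (R : Cube d) (E : Set (EuclideanSpace ℝ (Fin d)))
    (hE0 : volume (closure E) = 0) :
    Filter.Tendsto (Sj R E) Filter.atTop (nhds 0) := by
  have h := tendsto_measure_iInter_atTop (μ := volume)
    (fun j => (AA_measurable R E j).nullMeasurableSet)
    (antitone_nat_of_succ_le (fun j => AA_antitone_succ R E j))
    ⟨0, by rw [volume_AA]; exact Sj_ne_top R E 0⟩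
  have h0 : volume (⋂ j, AA R E j) = 0 :=
    le_antisymm (le_trans (measure_mono (iInter_AA_subset_closure R E)) (le_of_eq hE0))
      (zero_le)
  rw [h0] at h
  have heq : (volume ∘ AA R E) = Sj R E := funext fun j => volume_AA R E j
  rwa [heq] at h

theorem S_eq_tail {d : ℕ} (R : Cube d) (E : Set (EuclideanSpace ℝ (Fin d)))
    (hlim : Filter.Tendsto (Sj R E) Filter.atTop (nhds 0)) (j : ℕ) :
    Sj R E j = ∑' m : ℕ, Fj R E (j + 1 + m) := by
  have key : ∀ n, Sj R E j = (∑ m ∈ Finset.range n, Fj R E (j + 1 + m)) + Sj R E (n + j) := by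
    intro n
    induction n with
    | zero => simp
    | succ n ih =>
      rw [ih, Finset.sum_range_succ]
      rw [show n + j = (j + n) from by ring, show j + 1 + n = (j + n) + 1 from by ring,
        show n + 1 + j = (j + n) + 1 from by ring]
      rw [S_rec R E (j + n)]
      ring
  have h1 : Filter.Tendsto
      (fun n => (∑ m ∈ Finset.range n, Fj R E (j + 1 + m)) + Sj R E (n + j))
      Filter.atTop (nhds ((∑' m : ℕ, Fj R E (j + 1 + m)) + 0)) := by
    apply Filter.Tendsto.add
    · exact ENNReal.tendsto_nat_tsum _
    · exact hlim.comp (Filter.tendsto_add_atTop_nat j)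
  have h2 : Filter.Tendsto (fun _ : ℕ => Sj R E j) Filter.atTop (nhds (Sj R E j)) :=
    tendsto_const_nhds
  have h3 := tendsto_nhds_unique (h2.congr (fun n => key n)) h1
  simpa using h3


noncomputable def shiftEquiv (j : ℕ) : ℕ ≃ {n : ℕ // j + 1 ≤ n} :=
  Equiv.ofBijective (fun m => ⟨j + 1 + m, by omega⟩)
    ⟨fun a b h => by
        have := congrArg Subtype.val h
        simpa using this,
      fun n => ⟨n.1 - (j + 1), Subtype.ext (by have := n.2; simp; omega)⟩⟩

open Classical in
theorem tail_eq {d : ℕ} (R : Cube d) (E : Set (EuclideanSpace ℝ (Fin d))) (j : ℕ) :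
    ∑' m : ℕ, Fj R E (j + 1 + m) = ∑' n : ℕ, if j + 1 ≤ n then Fj R E n else 0 := by
  classical
  calc ∑' m : ℕ, Fj R E (j + 1 + m)
      = ∑' n : {n : ℕ // j + 1 ≤ n}, Fj R E n.1 := (shiftEquiv j).tsum_eq (fun n => Fj R E n.1)
    _ = ∑' n : ℕ, Set.indicator {n : ℕ | j + 1 ≤ n} (Fj R E) n := by
        exact tsum_subtype {n : ℕ | j + 1 ≤ n} (Fj R E)
    _ = ∑' n : ℕ, if j + 1 ≤ n then Fj R E n else 0 :=
        tsum_congr fun n => by by_cases h : j + 1 ≤ n <;> simp [Set.indicator_apply, h] <;> omega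

open Classical in
theorem col_eq {d : ℕ} (R : Cube d) (E : Set (EuclideanSpace ℝ (Fin d))) (n : ℕ) :
    ∑' j : ℕ, (if j + 1 ≤ n then Fj R E n else 0) = Fj R E n * ENNReal.ofReal n := by
  classical
  rw [tsum_eq_sum (s := Finset.range n) (fun j hj => if_neg (by
    simp only [Finset.mem_range] at hj; omega))]
  rw [Finset.sum_congr rfl (fun j hj => if_pos (by
    simp only [Finset.mem_range] at hj; omega))]
  rw [Finset.sum_const, Finset.card_range, nsmul_eq_mul, ENNReal.ofReal_natCast, mul_comm]


def maxEquiv {d : ℕ} (R : Cube d) (E : Set (EuclideanSpace ℝ (Fin d))) :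
    {Q' : Cube d // IsMaxEmpty R E Q'} ≃
      {Q : Cube d // IsDyadicSubcube R Q ∧ IsMaxEmpty R E Q} :=
  Equiv.subtypeEquivRight (fun Q => ⟨fun h => ⟨h.1, h⟩, fun h => h.2⟩)

/-- ∑_{Q ∈ 𝒟(R,E)} |Q| = ∑_{Q' ∈ ℱ(R,E)} |Q'| log₂(ℓ(R)/ℓ(Q')). -/
theorem stmt0 {d : ℕ} (E : Set (EuclideanSpace ℝ (Fin d))) (hE : E.Nonempty)
    (hE0 : volume (closure E) = 0) (R : Cube d) :
    ∑' Q : {Q : Cube d // IsDyadicSubcube R Q ∧ (Q.set ∩ E).Nonempty}, volume Q.1.set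
      = ∑' Q' : {Q' : Cube d // IsMaxEmpty R E Q'},
          volume Q'.1.set * ENNReal.ofReal (Real.logb 2 (R.l / Q'.1.l)) := by
  classical
  have hlhs : (∑' Q : {Q : Cube d // IsDyadicSubcube R Q ∧ (Q.set ∩ E).Nonempty},
      volume Q.1.set) = ∑' j : ℕ, Sj R E j := by
    rw [tsum_dyadic R (fun Q => (Q.set ∩ E).Nonempty) (fun Q => volume Q.set)]
    rfl
  have hrhs : (∑' Q' : {Q' : Cube d // IsMaxEmpty R E Q'},
      volume Q'.1.set * ENNReal.ofReal (Real.logb 2 (R.l / Q'.1.l)))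
      = ∑' j : ℕ, Fj R E j * ENNReal.ofReal j := by
    calc ∑' Q' : {Q' : Cube d // IsMaxEmpty R E Q'},
          volume Q'.1.set * ENNReal.ofReal (Real.logb 2 (R.l / Q'.1.l))
        = ∑' Q : {Q : Cube d // IsDyadicSubcube R Q ∧ IsMaxEmpty R E Q},
            volume Q.1.set * ENNReal.ofReal (Real.logb 2 (R.l / Q.1.l)) :=
          by exact Equiv.tsum_eq (maxEquiv R E) (fun Q => volume Q.1.set * ENNReal.ofReal (Real.logb 2 (R.l / Q.1.l)))
      _ = ∑' j : ℕ, ∑ k : Fin d → Fin (2 ^ j),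
            if IsMaxEmpty R E (gcF R j k) then
              volume (gcF R j k).set * ENNReal.ofReal (Real.logb 2 (R.l / (gcF R j k).l))
            else 0 :=
          tsum_dyadic R (IsMaxEmpty R E)
            (fun Q => volume Q.set * ENNReal.ofReal (Real.logb 2 (R.l / Q.l)))
      _ = ∑' j : ℕ, Fj R E j * ENNReal.ofReal j := by
          apply tsum_congr
          intro j
          have hR : R.l ≠ 0 := ne_of_gt R.l_pos
          have hlog : Real.logb 2 (R.l / (R.l / 2 ^ j)) = j := by
            rw [show R.l / (R.l / 2 ^ j) = (2:ℝ) ^ j from by field_simp, Real.logb_pow,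
              Real.logb_self_eq_one (by norm_num)]
            ring
          unfold Fj
          rw [Finset.sum_mul]
          apply Finset.sum_congr rfl
          intro k _
          rw [show (gcF R j k).l = R.l / 2 ^ j from rfl, hlog]
          split <;> simp
  rw [hlhs, hrhs]
  have hlim := Sj_tendsto R E hE0
  calc ∑' j : ℕ, Sj R E j
      = ∑' j : ℕ, ∑' m : ℕ, Fj R E (j + 1 + m) :=
        tsum_congr fun j => S_eq_tail R E hlim j
    _ = ∑' j : ℕ, ∑' n : ℕ, (if j + 1 ≤ n then Fj R E n else 0) :=
        tsum_congr fun j => tail_eq R E j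
    _ = ∑' n : ℕ, ∑' j : ℕ, (if j + 1 ≤ n then Fj R E n else 0) := ENNReal.tsum_comm
    _ = ∑' n : ℕ, Fj R E n * ENNReal.ofReal n := tsum_congr fun n => col_eq R E n
end

section
/- Let Q be a half-open cube in ℝ^d with side length ℓ(Q) and boundary ∂Q. Then (1/|Q|) ∫_Q log(1/dist(x, ∂Q)) dx = log(1/ℓ(Q)) + C, where C = log 2 + (1 + 1/2 + ⋯ + 1/d) depends only on the dimension d. -/
open MeasureTheory Metric

namespace Stmt1Aux
open Set Metric MeasureTheory

variable {d : ℕ}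

def Abox (a : Fin d → ℝ) (l : ℝ) : Set (EuclideanSpace ℝ (Fin d)) :=
  {x | ∀ i, x i ∈ Ico (a i) (a i + l)}

variable (a : Fin d → ℝ) {l : ℝ}

lemma pi_eq (s : Fin d → Set ℝ) :
    {x : EuclideanSpace ℝ (Fin d) | ∀ i, x i ∈ s i} = (PiLp.homeomorph 2 (fun _ : Fin d => ℝ)) ⁻¹' (univ.pi s) := by
  ext x
  exact ⟨fun h i _ => h i, fun h i => h i (Set.mem_univ i)⟩

lemma closure_pi' (s : Fin d → Set ℝ) :
    closure {x : EuclideanSpace ℝ (Fin d) | ∀ i, x i ∈ s i}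
      = {x : EuclideanSpace ℝ (Fin d) | ∀ i, x i ∈ closure (s i)} := by
  rw [pi_eq, ← Homeomorph.preimage_closure, closure_pi_set, ← pi_eq]

lemma interior_pi' (s : Fin d → Set ℝ) :
    interior {x : EuclideanSpace ℝ (Fin d) | ∀ i, x i ∈ s i}
      = {x : EuclideanSpace ℝ (Fin d) | ∀ i, x i ∈ interior (s i)} := by
  rw [pi_eq, ← Homeomorph.preimage_interior, interior_pi_set finite_univ, ← pi_eq]

lemma meas_pi' (s : Fin d → Set ℝ) (hs : ∀ i, MeasurableSet (s i)) :
    MeasurableSet {x : EuclideanSpace ℝ (Fin d) | ∀ i, x i ∈ s i} := by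
  have h : {x : EuclideanSpace ℝ (Fin d) | ∀ i, x i ∈ s i}
      = ((MeasurableEquiv.toLp 2 (Fin d → ℝ)).symm) ⁻¹' (univ.pi s) := by
    ext x; exact ⟨fun h i _ => h i, fun h i => h i (Set.mem_univ i)⟩
  rw [h]
  exact (MeasurableSet.univ_pi hs).preimage ((MeasurableEquiv.toLp 2 (Fin d → ℝ)).symm).measurable

lemma vol_pi' (s : Fin d → Set ℝ) (hs : ∀ i, MeasurableSet (s i)) :
    volume {x : EuclideanSpace ℝ (Fin d) | ∀ i, x i ∈ s i} = ∏ i, volume (s i) := by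
  have hmp := EuclideanSpace.volume_preserving_symm_measurableEquiv_toLp (Fin d)
  have h : {x : EuclideanSpace ℝ (Fin d) | ∀ i, x i ∈ s i}
      = ((MeasurableEquiv.toLp 2 (Fin d → ℝ)).symm) ⁻¹' (univ.pi s) := by
    ext x; exact ⟨fun h i _ => h i, fun h i => h i (Set.mem_univ i)⟩
  rw [h, hmp.measure_preimage (MeasurableSet.univ_pi hs).nullMeasurableSet, volume_pi_pi]

lemma coord_dist_le (x y : EuclideanSpace ℝ (Fin d)) (i : Fin d) :
    dist (x i) (y i) ≤ dist x y := by
  rw [EuclideanSpace.dist_eq]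
  have h : dist (x i) (y i) = Real.sqrt (dist (x i) (y i) ^ 2) := by
    rw [Real.sqrt_sq dist_nonneg]
  rw [h]
  apply Real.sqrt_le_sqrt
  exact Finset.single_le_sum (f := fun j => dist (x j) (y j) ^ 2)
    (fun j _ => sq_nonneg _) (Finset.mem_univ i)

lemma dist_update (x : EuclideanSpace ℝ (Fin d)) (i : Fin d) (c : ℝ) :
    dist x (WithLp.toLp 2 (Function.update x.ofLp i c)) = |x i - c| := by
  rw [EuclideanSpace.dist_eq, Finset.sum_eq_single i]
  · dsimp only; rw [Function.update_self, Real.dist_eq, Real.sqrt_sq_eq_abs, abs_abs]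
  · intro j _ hj
    dsimp only; rw [Function.update_of_ne hj]; simp
  · simp

lemma closure_Abox (hl : 0 < l) :
    closure (Abox a l) = {x : EuclideanSpace ℝ (Fin d) | ∀ i, x i ∈ Icc (a i) (a i + l)} := by
  rw [Abox, closure_pi']
  ext x
  simp only [mem_setOf_eq]
  refine forall_congr' fun i => ?_
  rw [closure_Ico (by linarith : a i ≠ a i + l)]

lemma interior_Abox :
    interior (Abox a l) = {x : EuclideanSpace ℝ (Fin d) | ∀ i, x i ∈ Ioo (a i) (a i + l)} := by
  rw [Abox, interior_pi']
  simp only [interior_Ico]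

lemma measurable_Abox : MeasurableSet (Abox a l) :=
  meas_pi' _ fun _ => measurableSet_Ico

lemma vol_Abox (hl0 : 0 ≤ l) : volume (Abox a l) = ENNReal.ofReal (l ^ d) := by
  rw [Abox, vol_pi' _ (fun _ => measurableSet_Ico)]
  simp [Real.volume_Ico, ← ENNReal.ofReal_pow hl0]

lemma frontier_Abox (hl : 0 < l) :
    frontier (Abox a l) = {x : EuclideanSpace ℝ (Fin d) | ∀ i, x i ∈ Icc (a i) (a i + l)}
      \ {x : EuclideanSpace ℝ (Fin d) | ∀ i, x i ∈ Ioo (a i) (a i + l)} := by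
  rw [frontier, closure_Abox a hl, interior_Abox]

lemma vol_frontier_Abox (hl : 0 < l) : volume (frontier (Abox a l)) = 0 := by
  rw [frontier_Abox a hl]
  have h1 : volume {x : EuclideanSpace ℝ (Fin d) | ∀ i, x i ∈ Icc (a i) (a i + l)}
      = ENNReal.ofReal (l ^ d) := by
    rw [vol_pi' _ (fun _ => measurableSet_Icc)]
    simp [Real.volume_Icc, ← ENNReal.ofReal_pow hl.le]
  have h2 : volume {x : EuclideanSpace ℝ (Fin d) | ∀ i, x i ∈ Ioo (a i) (a i + l)}
      = ENNReal.ofReal (l ^ d) := by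
    rw [vol_pi' _ (fun _ => measurableSet_Ioo)]
    simp [Real.volume_Ioo, ← ENNReal.ofReal_pow hl.le]
  rw [measure_diff (by intro x hx i; exact Ioo_subset_Icc_self (hx i))
    (meas_pi' _ fun _ => measurableSet_Ioo).nullMeasurableSet
    (by rw [h2]; exact ENNReal.ofReal_ne_top), h1, h2, tsub_self]

lemma update_mem_frontier (hl : 0 < l) {x : EuclideanSpace ℝ (Fin d)} (hx : x ∈ Abox a l)
    (i : Fin d) :
    WithLp.toLp 2 (Function.update x.ofLp i (a i)) ∈ frontier (Abox a l) ∧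
      WithLp.toLp 2 (Function.update x.ofLp i (a i + l)) ∈ frontier (Abox a l) := by
  rw [frontier_Abox a hl]
  constructor
  · refine ⟨fun j => ?_, fun h => ?_⟩
    · rcases eq_or_ne j i with rfl | hj
      · rw [PiLp.toLp_apply, Function.update_self]; exact ⟨le_refl _, by linarith⟩
      · rw [PiLp.toLp_apply, Function.update_of_ne hj]; exact ⟨(hx j).1, (hx j).2.le⟩
    · have := (h i).1
      rw [PiLp.toLp_apply, Function.update_self] at this
      exact lt_irrefl _ this
  · refine ⟨fun j => ?_, fun h => ?_⟩
    · rcases eq_or_ne j i with rfl | hj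
      · rw [PiLp.toLp_apply, Function.update_self]; exact ⟨by linarith, le_refl _⟩
      · rw [PiLp.toLp_apply, Function.update_of_ne hj]; exact ⟨(hx j).1, (hx j).2.le⟩
    · have := (h i).2
      rw [PiLp.toLp_apply, Function.update_self] at this
      exact lt_irrefl _ this

lemma infDist_le_min (hl : 0 < l) {x : EuclideanSpace ℝ (Fin d)} (hx : x ∈ Abox a l) (i : Fin d) :
    infDist x (frontier (Abox a l)) ≤ min (x i - a i) (a i + l - x i) := by
  obtain ⟨h1, h2⟩ := update_mem_frontier a hl hx i
  have d1 := infDist_le_dist_of_mem (α := EuclideanSpace ℝ (Fin d)) (x := x) h1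
  have d2 := infDist_le_dist_of_mem (α := EuclideanSpace ℝ (Fin d)) (x := x) h2
  rw [dist_update, abs_of_nonneg (by have := (hx i).1; linarith)] at d1
  rw [dist_update, abs_of_nonpos (by have := (hx i).2; linarith), neg_sub] at d2
  exact le_min d1 (by linarith)

lemma frontier_nonempty (hd : 0 < d) (hl : 0 < l) : (frontier (Abox a l)).Nonempty := by
  refine ⟨WithLp.toLp 2 a, ?_⟩
  rw [frontier_Abox a hl]
  refine ⟨fun i => ⟨le_refl _, by rw [PiLp.toLp_apply]; linarith⟩, fun h => ?_⟩
  exact lt_irrefl _ (h ⟨0, hd⟩).1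

lemma le_infDist_of (hd : 0 < d) (hl : 0 < l) {x : EuclideanSpace ℝ (Fin d)} {s : ℝ}
    (h : ∀ i, s ≤ x i - a i ∧ s ≤ a i + l - x i) :
    s ≤ infDist x (frontier (Abox a l)) := by
  by_contra hc
  push_neg at hc
  rcases (infDist_lt_iff (frontier_nonempty a hd hl)).mp hc with ⟨y, hy, hxy⟩
  rw [frontier_Abox a hl] at hy
  obtain ⟨hyc, hyo⟩ := hy
  obtain ⟨i, hi⟩ := not_forall.mp hyo
  have hdist := coord_dist_le x y i
  rw [Real.dist_eq] at hdist
  rw [mem_Ioo, not_and_or, not_lt, not_lt] at hi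
  rcases hi with hi | hi
  · have hb : x i - a i ≤ |x i - y i| := le_trans (by linarith) (le_abs_self _)
    have := (h i).1
    linarith
  · have hb : a i + l - x i ≤ |x i - y i| := le_trans (by linarith) (neg_le_abs _)
    have := (h i).2
    linarith

/-! ### The calculus lemma: `∫_{(0,∞)} (1 - (1 - e^{-t})^d) dt = H_d`. -/

lemma geom_id (u : ℝ) (n : ℕ) :
    ∑ k ∈ Finset.range n, (1 - u) ^ k * u = 1 - (1 - u) ^ n := by
  have h := geom_sum_mul (1 - u) n
  rw [← Finset.sum_mul]
  linear_combination -h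

lemma F_hasDerivAt (n : ℕ) (t : ℝ) :
    HasDerivAt (fun t : ℝ => ∑ k ∈ Finset.range n,
        (1 - Real.exp (-t)) ^ (k + 1) / ((k : ℝ) + 1))
      (1 - (1 - Real.exp (-t)) ^ n) t := by
  have key : ∀ k : ℕ, HasDerivAt (fun t : ℝ => (1 - Real.exp (-t)) ^ (k + 1) / ((k : ℝ) + 1))
      ((1 - Real.exp (-t)) ^ k * Real.exp (-t)) t := by
    intro k
    have h1 : HasDerivAt (fun t : ℝ => -t) (-1) t := (hasDerivAt_id t).neg
    have h2 : HasDerivAt (fun t : ℝ => Real.exp (-t)) (Real.exp (-t) * -1) t := h1.exp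
    have h3 : HasDerivAt (fun t : ℝ => 1 - Real.exp (-t)) (Real.exp (-t)) t := by
      simpa using h2.const_sub 1
    have h4 := (h3.pow (k + 1)).div_const ((k : ℝ) + 1)
    refine h4.congr_deriv ?_
    have hk : ((k : ℝ) + 1) ≠ 0 := by positivity
    rw [Nat.add_sub_cancel]; push_cast
    field_simp
  have hsum := HasDerivAt.fun_sum (fun k (_ : k ∈ Finset.range n) => key k)
  refine hsum.congr_deriv ?_
  rw [← geom_id (Real.exp (-t)) n]

lemma F_tendsto (n : ℕ) :
    Filter.Tendsto (fun t : ℝ => ∑ k ∈ Finset.range n,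
        (1 - Real.exp (-t)) ^ (k + 1) / ((k : ℝ) + 1))
      Filter.atTop (nhds (∑ k ∈ Finset.range n, (1 : ℝ) / ((k : ℝ) + 1))) := by
  apply tendsto_finset_sum
  intro k _
  have h : Filter.Tendsto (fun t : ℝ => Real.exp (-t)) Filter.atTop (nhds 0) :=
    Real.tendsto_exp_neg_atTop_nhds_zero
  have h1 : Filter.Tendsto (fun t : ℝ => 1 - Real.exp (-t)) Filter.atTop (nhds (1 - 0)) :=
    tendsto_const_nhds.sub h
  have h2 := (h1.pow (k + 1)).div_const ((k : ℝ) + 1)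
  simpa using h2

lemma deriv_nonneg {t : ℝ} (ht : 0 ≤ t) (n : ℕ) : 0 ≤ 1 - (1 - Real.exp (-t)) ^ n := by
  have h1 : Real.exp (-t) ≤ 1 := Real.exp_le_one_iff.mpr (by linarith)
  have h2 : (0:ℝ) < Real.exp (-t) := Real.exp_pos _
  have : (1 - Real.exp (-t)) ^ n ≤ 1 := pow_le_one₀ (by linarith) (by linarith)
  linarith

lemma calc_int (n : ℕ) :
    (IntegrableOn (fun t => 1 - (1 - Real.exp (-t)) ^ n) (Ioi (0:ℝ)) volume) ∧
    ∫ t in Ioi (0:ℝ), (1 - (1 - Real.exp (-t)) ^ n)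
      = ∑ k ∈ Finset.range n, (1 : ℝ) / ((k : ℝ) + 1) := by
  have hderiv : ∀ t ∈ Ici (0:ℝ), HasDerivAt (fun t : ℝ => ∑ k ∈ Finset.range n,
      (1 - Real.exp (-t)) ^ (k + 1) / ((k : ℝ) + 1)) (1 - (1 - Real.exp (-t)) ^ n) t :=
    fun t _ => F_hasDerivAt n t
  have hpos : ∀ t ∈ Ioi (0:ℝ), 0 ≤ 1 - (1 - Real.exp (-t)) ^ n :=
    fun t ht => deriv_nonneg (le_of_lt ht) n
  constructor
  · exact integrableOn_Ioi_deriv_of_nonneg' hderiv hpos (F_tendsto n)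
  · rw [integral_Ioi_of_hasDerivAt_of_nonneg' hderiv hpos (F_tendsto n)]
    norm_num [Real.exp_zero]

end Stmt1Aux

open Set Stmt1Aux in
theorem stmt1 {d : ℕ} (hd : 0 < d) (Q : Cube d) :
    (volume Q.set).toReal⁻¹ * ∫ x in Q.set, Real.log (1 / infDist x (frontier Q.set))
      = Real.log (1 / Q.l) + (Real.log 2 + ∑ k ∈ Finset.range d, (1 : ℝ) / (k + 1)) := by
  obtain ⟨a, l, hl⟩ := Q
  have hQA : Cube.set ⟨a, l, hl⟩ = Abox a l := by
    ext x; simp [Cube.set, Abox, mem_Ico]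
  rw [hQA]
  show (volume (Abox a l)).toReal⁻¹
      * ∫ x in Abox a l, Real.log (1 / infDist x (frontier (Abox a l))) = _
  set H : ℝ := ∑ k ∈ Finset.range d, (1 : ℝ) / ((k : ℝ) + 1) with hH
  have hH0 : 0 ≤ H := Finset.sum_nonneg fun k _ => by positivity
  set m : EuclideanSpace ℝ (Fin d) → ℝ := fun x => infDist x (frontier (Abox a l)) with hm
  set g : EuclideanSpace ℝ (Fin d) → ℝ := fun x => Real.log (l / (2 * m x)) with hg
  have hne : (frontier (Abox a l)).Nonempty := frontier_nonempty a hd hl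
  have hAm : MeasurableSet (Abox a l) := measurable_Abox a
  have hvolA : volume (Abox a l) = ENNReal.ofReal (l ^ d) := vol_Abox a hl.le
  set μA := volume.restrict (Abox a l) with hμA
  have hgm : Measurable g := by
    apply Real.measurable_log.comp
    exact measurable_const.div (measurable_infDist.const_mul 2)
  have hmnn : ∀ x, 0 ≤ m x := fun x => infDist_nonneg
  have hmle : ∀ x ∈ Abox a l, m x ≤ l / 2 := by
    intro x hx
    have hle := infDist_le_min a hl hx ⟨0, hd⟩
    set i : Fin d := ⟨0, hd⟩
    rcases le_total (x i - a i) (a i + l - x i) with h | h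
    · rw [min_eq_left h] at hle; linarith
    · rw [min_eq_right h] at hle; linarith
  have hgnn : 0 ≤ᵐ[μA] g := by
    filter_upwards [self_mem_ae_restrict hAm] with x hx
    rcases eq_or_lt_of_le (hmnn x) with h0 | h0
    · simp [hg, ← h0]
    · apply Real.log_nonneg
      rw [le_div_iff₀ (by positivity)]
      have := hmle x hx; linarith
  have hlc := lintegral_eq_lintegral_meas_lt μA hgnn hgm.aemeasurable
  -- the distribution function
  have hmeas_t : ∀ t ∈ Ioi (0:ℝ),
      μA {x | t < g x} = ENNReal.ofReal (l ^ d * (1 - (1 - Real.exp (-t)) ^ d)) := by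
    intro t ht
    have ht0 : (0:ℝ) < t := ht
    set s : ℝ := l / 2 * Real.exp (-t) with hs
    have hs0 : 0 < s := by positivity
    have hsl : s < l / 2 := by
      have h1 : Real.exp (-t) < 1 := Real.exp_lt_one_iff.mpr (by linarith)
      nlinarith
    set C : Set (EuclideanSpace ℝ (Fin d)) :=
      {x | ∀ i, x i ∈ Icc (a i + s) (a i + l - s)} with hC
    have hCA : C ⊆ Abox a l := by
      intro x hx i
      obtain ⟨h1, h2⟩ := hx i
      exact ⟨by linarith, by linarith⟩
    have hCm : ∀ x ∈ C, s ≤ m x := by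
      intro x hx
      refine le_infDist_of a hd hl fun i => ?_
      obtain ⟨h1, h2⟩ := hx i
      exact ⟨by linarith, by linarith⟩
    have hmC : ∀ x ∈ Abox a l, s ≤ m x → x ∈ C := by
      intro x hx hsm i
      have hle := infDist_le_min a hl hx i
      have h1 := hsm.trans (hle.trans (min_le_left _ _))
      have h2 := hsm.trans (hle.trans (min_le_right _ _))
      exact ⟨by linarith, by linarith⟩
    have key1 : {x | t < g x} ∩ Abox a l ⊆ Abox a l \ C := by
      rintro x ⟨hgx, hxA⟩
      refine ⟨hxA, fun hxC => ?_⟩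
      have hgx' : t < g x := hgx
      have hmx : 0 < m x := by
        rcases eq_or_lt_of_le (hmnn x) with h0 | h0
        · exfalso
          have hz : g x = 0 := by simp [hg, ← h0]
          rw [hz] at hgx'; linarith
        · exact h0
      have h1 : Real.exp t < l / (2 * m x) :=
        (Real.lt_log_iff_exp_lt (by positivity)).mp hgx'
      have h2 : m x < s := by
        rw [lt_div_iff₀ (by positivity)] at h1
        have hexp : (0:ℝ) < Real.exp t := Real.exp_pos t
        have h3 : m x * Real.exp t < l / 2 := by nlinarith
        rw [hs, Real.exp_neg]
        calc m x = m x * Real.exp t * (Real.exp t)⁻¹ := by field_simp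
          _ < l / 2 * (Real.exp t)⁻¹ := mul_lt_mul_of_pos_right h3 (by positivity)
      exact absurd (hCm x hxC) (not_le.mpr h2)
    have key2 : Abox a l \ C ⊆ ({x | t < g x} ∩ Abox a l) ∪ frontier (Abox a l) := by
      rintro x ⟨hxA, hxC⟩
      by_cases hxF : x ∈ frontier (Abox a l)
      · exact Or.inr hxF
      refine Or.inl ⟨?_, hxA⟩
      have hmx : 0 < m x := by
        rcases eq_or_lt_of_le (hmnn x) with h0 | h0
        · exact absurd ((isClosed_frontier.mem_iff_infDist_zero hne).mpr h0.symm) hxF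
        · exact h0
      have hms : m x < s := by
        by_contra hcon
        push_neg at hcon
        exact hxC (hmC x hxA hcon)
      show t < g x
      rw [hg]
      rw [Real.lt_log_iff_exp_lt (by positivity)]
      have he : l / (2 * s) = Real.exp t := by
        rw [hs, Real.exp_neg]
        have := Real.exp_pos t
        field_simp
      calc Real.exp t = l / (2 * s) := he.symm
        _ < l / (2 * m x) :=
          div_lt_div_of_pos_left hl (by positivity) (by linarith)
    have hCmeas : MeasurableSet C := meas_pi' _ fun _ => measurableSet_Icc
    have hvolC : volume C = ENNReal.ofReal ((l - 2 * s) ^ d) := by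
      rw [hC, vol_pi' _ (fun _ => measurableSet_Icc)]
      have he : ∀ i : Fin d, volume (Icc (a i + s) (a i + l - s)) = ENNReal.ofReal (l - 2 * s) := by
        intro i; rw [Real.volume_Icc]; ring_nf
      rw [Finset.prod_congr rfl fun i _ => he i, Finset.prod_const, Finset.card_univ,
        Fintype.card_fin, ← ENNReal.ofReal_pow (by linarith)]
    have hvolAC : volume (Abox a l \ C) = ENNReal.ofReal (l ^ d - (l - 2 * s) ^ d) := by
      rw [measure_diff hCA hCmeas.nullMeasurableSet (by rw [hvolC]; exact ENNReal.ofReal_ne_top),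
        hvolA, hvolC, ← ENNReal.ofReal_sub _ (pow_nonneg (by linarith) d)]
    have hFr0 : volume (frontier (Abox a l)) = 0 := vol_frontier_Abox a hl
    have hμ : μA {x | t < g x} = volume ({x | t < g x} ∩ Abox a l) :=
      Measure.restrict_apply' hAm
    have hsand : volume ({x | t < g x} ∩ Abox a l) = volume (Abox a l \ C) := by
      apply le_antisymm (measure_mono key1)
      calc volume (Abox a l \ C)
          ≤ volume (({x | t < g x} ∩ Abox a l) ∪ frontier (Abox a l)) := measure_mono key2
        _ ≤ volume ({x | t < g x} ∩ Abox a l) + volume (frontier (Abox a l)) :=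
            measure_union_le _ _
        _ = volume ({x | t < g x} ∩ Abox a l) := by rw [hFr0, add_zero]
    rw [hμ, hsand, hvolAC]
    congr 1
    have h2s : l - 2 * s = l * (1 - Real.exp (-t)) := by rw [hs]; ring
    rw [h2s, mul_pow]
    ring
  -- compute the lintegral
  have hcalc := calc_int d
  have hintOn : IntegrableOn (fun t => l ^ d * (1 - (1 - Real.exp (-t)) ^ d)) (Ioi (0:ℝ)) :=
    hcalc.1.const_mul _
  have hIH : ∫ t in Ioi (0:ℝ), l ^ d * (1 - (1 - Real.exp (-t)) ^ d) = l ^ d * H := by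
    rw [integral_const_mul, hcalc.2, hH]
  have hrhs : ∫⁻ t in Ioi (0:ℝ), μA {x | t < g x} = ENNReal.ofReal (l ^ d * H) := by
    rw [setLIntegral_congr_fun measurableSet_Ioi hmeas_t,
      ← ofReal_integral_eq_lintegral_ofReal hintOn ?_, hIH]
    rw [Filter.EventuallyLE, ae_restrict_iff' measurableSet_Ioi]
    refine ae_of_all _ fun t ht => ?_
    have := deriv_nonneg (le_of_lt ht) d
    positivity
  have hkey : ∫⁻ x, ENNReal.ofReal (g x) ∂μA = ENNReal.ofReal (l ^ d * H) := hlc.trans hrhs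
  have hgint : Integrable g μA :=
    ⟨hgm.aestronglyMeasurable, by
      rw [hasFiniteIntegral_iff_ofReal hgnn, hkey]; exact ENNReal.ofReal_lt_top⟩
  have hintg : ∫ x, g x ∂μA = l ^ d * H := by
    rw [integral_eq_lintegral_of_nonneg_ae hgnn hgm.aestronglyMeasurable, hkey,
      ENNReal.toReal_ofReal (by positivity)]
  -- a.e. rewrite of the integrand
  have hfr_ae : ∀ᵐ x ∂μA, x ∉ frontier (Abox a l) := by
    refine ae_restrict_of_ae ?_
    have h := vol_frontier_Abox a hl
    exact measure_eq_zero_iff_ae_notMem.mp h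
  have hcongr : ∀ᵐ x ∂μA,
      Real.log (1 / m x) = g x + Real.log (2 / l) := by
    filter_upwards [hfr_ae] with x hxF
    have hmx : 0 < m x := by
      rcases eq_or_lt_of_le (hmnn x) with h0 | h0
      · exact absurd ((isClosed_frontier.mem_iff_infDist_zero hne).mpr h0.symm) hxF
      · exact h0
    have hgx : g x = Real.log l - (Real.log 2 + Real.log (m x)) := by
      show Real.log (l / (2 * m x)) = _
      rw [Real.log_div (ne_of_gt hl) (by positivity),
        Real.log_mul two_ne_zero (ne_of_gt hmx)]
    rw [one_div, Real.log_inv, hgx, Real.log_div two_ne_zero (ne_of_gt hl)]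
    ring
  have : IsFiniteMeasure μA :=
    ⟨by rw [hμA, Measure.restrict_apply_univ, hvolA]; exact ENNReal.ofReal_lt_top⟩
  rw [show (∫ x in Abox a l, Real.log (1 / infDist x (frontier (Abox a l))))
      = ∫ x, Real.log (1 / m x) ∂μA from rfl]
  rw [integral_congr_ae hcongr, integral_add hgint (integrable_const _), integral_const, hintg]
  rw [hμA, measureReal_def, Measure.restrict_apply_univ, hvolA, ENNReal.toReal_ofReal (by positivity),
    smul_eq_mul]
  have hld : (l : ℝ) ^ d ≠ 0 := by positivity
  rw [Real.log_div two_ne_zero (ne_of_gt hl), one_div, Real.log_inv]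
  field_simp
  ring
end

section
/- Let E ⊆ ℝ^d be a set whose closure has Lebesgue measure zero, R a cube, and M(R) a largest empty dyadic subcube. Define 𝒟₀(R,E) = {Q ∈ 𝒟(R) : Q ∩ E ≠ ∅ and |Q| ≤ |M(R)|}. Then ∑_{Q ∈ 𝒟₀(R,E)} |Q| = ∑_{Q' ∈ ℱ(R,E)} |Q'| · log₂(ℓ(M(R))/ℓ(Q')). -/
open MeasureTheory Metric

namespace St15
variable {d : ℕ}

theorem Cube.ext' {Q1 Q2 : Cube d} (ha : Q1.a = Q2.a) (hl : Q1.l = Q2.l) : Q1 = Q2 := by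
  cases Q1; cases Q2; simp_all

/-- the dyadic cube of `R` at level `j` with index `k` -/
noncomputable def dy (R : Cube d) (j : ℕ) (k : Fin d → ℕ) : Cube d :=
  ⟨fun i => R.a i + (k i : ℝ) * (R.l / 2 ^ j), R.l / 2 ^ j, div_pos R.l_pos (by positivity)⟩

lemma dy_l (R : Cube d) (j : ℕ) (k : Fin d → ℕ) : (dy R j k).l = R.l / 2 ^ j := rfl

lemma mem_dy {R : Cube d} {j k} {x : EuclideanSpace ℝ (Fin d)} :
    x ∈ (dy R j k).set ↔ ∀ i, R.a i + (k i : ℝ) * (R.l / 2 ^ j) ≤ x i ∧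
      x i < R.a i + ((k i : ℝ) + 1) * (R.l / 2 ^ j) := by
  unfold Cube.set dy; simp only [Set.mem_setOf_eq]
  constructor <;> intro h i <;> obtain ⟨h1, h2⟩ := h i <;> exact ⟨h1, by ring_nf; ring_nf at h2; linarith⟩

lemma dy_isDyadic {R : Cube d} {j k} (hk : ∀ i, k i < 2 ^ j) : IsDyadicSubcube R (dy R j k) :=
  ⟨j, k, hk, rfl, fun _ => rfl⟩

lemma isDyadic_iff {R Q : Cube d} : IsDyadicSubcube R Q ↔
    ∃ j k, (∀ i, k i < 2 ^ j) ∧ Q = dy R j k := by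
  constructor
  · rintro ⟨j, k, hk, hl, ha⟩
    exact ⟨j, k, hk, Cube.ext' (funext ha) hl⟩
  · rintro ⟨j, k, hk, rfl⟩; exact dy_isDyadic hk

lemma dy_subset_R {R : Cube d} {j k} (hk : ∀ i, k i < 2 ^ j) : (dy R j k).set ⊆ R.set := by
  intro x hx i
  obtain ⟨h1, h2⟩ := mem_dy.1 hx i
  have hs : (0:ℝ) < R.l / 2 ^ j := div_pos R.l_pos (by positivity)
  have hki : ((k i : ℝ) + 1) ≤ 2 ^ j := by exact_mod_cast hk i
  constructor
  · nlinarith [(k i).cast_nonneg (α := ℝ)]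
  · have : ((k i : ℝ) + 1) * (R.l / 2 ^ j) ≤ (2:ℝ) ^ j * (R.l / 2 ^ j) := by nlinarith
    calc x i < R.a i + ((k i : ℝ) + 1) * (R.l / 2 ^ j) := h2
    _ ≤ R.a i + (2:ℝ) ^ j * (R.l / 2 ^ j) := by linarith
    _ = R.a i + R.l := by field_simp

/-- nesting: coarser cube contains finer cube if they intersect -/
lemma dy_nested {R : Cube d} {j1 j2 : ℕ} {k1 k2} (hj : j1 ≤ j2)
    (hne : ((dy R j1 k1).set ∩ (dy R j2 k2).set).Nonempty) :
    (dy R j2 k2).set ⊆ (dy R j1 k1).set := by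
  obtain ⟨x, hx1, hx2⟩ := hne
  intro y hy
  rw [mem_dy] at *
  intro i
  obtain ⟨a1, b1⟩ := hx1 i; obtain ⟨a2, b2⟩ := hx2 i; obtain ⟨c1, c2⟩ := hy i
  set s2 : ℝ := R.l / 2 ^ j2 with hs2
  have hs2p : (0:ℝ) < s2 := div_pos R.l_pos (by positivity)
  have hpow : (2:ℝ) ^ j2 = 2 ^ (j2 - j1) * 2 ^ j1 := by
    rw [← pow_add]; congr 1; omega
  have ht : R.l / 2 ^ j1 = (2:ℝ) ^ (j2 - j1) * s2 := by
    rw [hs2, hpow]; field_simp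
  rw [ht] at a1 b1 ⊢
  -- k1 i * 2^(j2-j1) ≤ k2 i  and  k2 i + 1 ≤ (k1 i + 1) * 2^(j2-j1)  (as reals)
  have h1 : (k1 i : ℝ) * 2 ^ (j2 - j1) < (k2 i : ℝ) + 1 := by
    have h := a1.trans_lt b2
    have h' : ((k1 i : ℝ) * 2 ^ (j2 - j1)) * s2 < ((k2 i : ℝ) + 1) * s2 := by nlinarith
    exact lt_of_mul_lt_mul_right h' hs2p.le
  have h2 : (k2 i : ℝ) < ((k1 i : ℝ) + 1) * 2 ^ (j2 - j1) := by
    have h := a2.trans_lt b1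
    have h' : (k2 i : ℝ) * s2 < (((k1 i : ℝ) + 1) * 2 ^ (j2 - j1)) * s2 := by nlinarith
    exact lt_of_mul_lt_mul_right h' hs2p.le
  have h1n : k1 i * 2 ^ (j2 - j1) ≤ k2 i := by
    have h'' : k1 i * 2 ^ (j2 - j1) < k2 i + 1 := by exact_mod_cast (by push_cast; linarith : (↑(k1 i * 2 ^ (j2 - j1)) : ℝ) < ↑(k2 i + 1))
    omega
  have h2n : k2 i + 1 ≤ (k1 i + 1) * 2 ^ (j2 - j1) := by
    have h'' : k2 i < (k1 i + 1) * 2 ^ (j2 - j1) := by exact_mod_cast (by push_cast; linarith : (↑(k2 i) : ℝ) < ↑((k1 i + 1) * 2 ^ (j2 - j1)))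
    omega
  have h1r : (k1 i : ℝ) * 2 ^ (j2 - j1) ≤ (k2 i : ℝ) := by exact_mod_cast h1n
  have h2r : (k2 i : ℝ) + 1 ≤ ((k1 i : ℝ) + 1) * 2 ^ (j2 - j1) := by
    have := h2n
    push_cast at this ⊢
    exact_mod_cast this
  constructor
  · nlinarith
  · nlinarith

/-- same level intersecting dyadic cubes are equal -/
lemma dy_eq_of_inter {R : Cube d} {j : ℕ} {k1 k2}
    (hne : ((dy R j k1).set ∩ (dy R j k2).set).Nonempty) : k1 = k2 := by
  obtain ⟨x, hx1, hx2⟩ := hne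
  funext i
  obtain ⟨a1, b1⟩ := mem_dy.1 hx1 i; obtain ⟨a2, b2⟩ := mem_dy.1 hx2 i
  have hsp : (0:ℝ) < R.l / 2 ^ j := div_pos R.l_pos (by positivity)
  have e1 : (k1 i : ℝ) < (k2 i : ℝ) + 1 := by
    have h := a1.trans_lt b2; nlinarith
  have e2 : (k2 i : ℝ) < (k1 i : ℝ) + 1 := by
    have h := a2.trans_lt b1; nlinarith
  have f1 : k1 i < k2 i + 1 := by exact_mod_cast (by push_cast; linarith : ((k1 i : ℝ)) < ↑(k2 i + 1))
  have f2 : k2 i < k1 i + 1 := by exact_mod_cast (by push_cast; linarith : ((k2 i : ℝ)) < ↑(k1 i + 1))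
  omega

open MeasureTheory in
lemma vol_cube (Q : Cube d) : volume Q.set = ENNReal.ofReal (Q.l ^ d) := by
  have h : Q.set = (MeasurableEquiv.toLp 2 (Fin d → ℝ)).symm ⁻¹'
      (Set.univ.pi fun i => Set.Ico (Q.a i) (Q.a i + Q.l)) := by
    ext x; simp [Cube.set, MeasurableEquiv.toLp_symm_apply, Set.mem_pi]
  rw [h, (EuclideanSpace.volume_preserving_symm_measurableEquiv_toLp (Fin d)).measure_preimage
    (MeasurableSet.univ_pi fun i => measurableSet_Ico).nullMeasurableSet]
  rw [volume_pi_pi]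
  simp [Real.volume_Ico, ← ENNReal.ofReal_pow Q.l_pos.le]

lemma meas_cube (Q : Cube d) : MeasurableSet Q.set := by
  have h : Q.set = (MeasurableEquiv.toLp 2 (Fin d → ℝ)).symm ⁻¹'
      (Set.univ.pi fun i => Set.Ico (Q.a i) (Q.a i + Q.l)) := by
    ext x; simp [Cube.set, MeasurableEquiv.toLp_symm_apply, Set.mem_pi]
  rw [h]
  exact (MeasurableEquiv.toLp 2 (Fin d → ℝ)).symm.measurable
    (MeasurableSet.univ_pi fun i => measurableSet_Ico)

/-- corner of a cube belongs to it -/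
lemma corner_mem (Q : Cube d) : (WithLp.toLp 2 Q.a : EuclideanSpace ℝ (Fin d)) ∈ Q.set :=
  fun i => ⟨le_refl _, by linarith [Q.l_pos]⟩

/-- index of the level-`m` cube containing `x` -/
noncomputable def kAt (R : Cube d) (m : ℕ) (x : EuclideanSpace ℝ (Fin d)) : Fin d → ℕ :=
  fun i => ⌊(x i - R.a i) / (R.l / 2 ^ m)⌋₊

lemma kAt_spec {R : Cube d} {x : EuclideanSpace ℝ (Fin d)} (hx : x ∈ R.set) (m : ℕ) :
    (∀ i, kAt R m x i < 2 ^ m) ∧ x ∈ (dy R m (kAt R m x)).set := by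
  have hsp : (0:ℝ) < R.l / 2 ^ m := div_pos R.l_pos (by positivity)
  have key : ∀ i, (kAt R m x i : ℝ) * (R.l / 2 ^ m) ≤ x i - R.a i ∧
      x i - R.a i < ((kAt R m x i : ℝ) + 1) * (R.l / 2 ^ m) ∧ kAt R m x i < 2 ^ m := by
    intro i
    obtain ⟨h1, h2⟩ := hx i
    have hnn : (0:ℝ) ≤ (x i - R.a i) / (R.l / 2 ^ m) := div_nonneg (by linarith) hsp.le
    have fl : (⌊(x i - R.a i) / (R.l / 2 ^ m)⌋₊ : ℝ) ≤ (x i - R.a i) / (R.l / 2 ^ m) :=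
      Nat.floor_le hnn
    have fu : (x i - R.a i) / (R.l / 2 ^ m) < ⌊(x i - R.a i) / (R.l / 2 ^ m)⌋₊ + 1 :=
      Nat.lt_floor_add_one _
    refine ⟨?_, ?_, ?_⟩
    · have := mul_le_mul_of_nonneg_right fl hsp.le
      calc (kAt R m x i : ℝ) * (R.l / 2 ^ m)
          ≤ ((x i - R.a i) / (R.l / 2 ^ m)) * (R.l / 2 ^ m) := this
        _ = x i - R.a i := div_mul_cancel₀ _ hsp.ne'
    · have heq : x i - R.a i = ((x i - R.a i) / (R.l / 2 ^ m)) * (R.l / 2 ^ m) := (div_mul_cancel₀ _ hsp.ne').symm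
      rw [heq]
      exact mul_lt_mul_of_pos_right fu hsp
    · have hb : (x i - R.a i) / (R.l / 2 ^ m) < 2 ^ m := by
        rw [div_lt_iff₀ hsp]
        have h3 : (2:ℝ) ^ m * (R.l / 2 ^ m) = R.l := by field_simp
        rw [h3]; linarith
      have h4 : ((kAt R m x i : ℕ) : ℝ) < ((2 ^ m : ℕ) : ℝ) := by
        push_cast; exact fl.trans_lt hb
      exact_mod_cast h4
  refine ⟨fun i => (key i).2.2, mem_dy.2 fun i => ⟨by linarith [(key i).1], by linarith [(key i).2.1]⟩⟩

lemma level_unique {R : Cube d} {j j' : ℕ} (h : R.l / 2 ^ j = R.l / 2 ^ j') : j = j' := by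
  have hl := R.l_pos.ne'
  have h2 : (2:ℝ) ^ j' = 2 ^ j := by
    rw [div_eq_div_iff (by positivity) (by positivity)] at h
    exact mul_left_cancel₀ hl h
  have h3 : ((2 ^ j' : ℕ) : ℝ) = ((2 ^ j : ℕ) : ℝ) := by push_cast; exact h2
  have h4 : (2:ℕ) ^ j' = 2 ^ j := by exact_mod_cast h3
  exact (Nat.pow_right_injective (by norm_num) h4).symm

lemma dist_le_of_mem_cube {Q : Cube d} {x y : EuclideanSpace ℝ (Fin d)}
    (hx : x ∈ Q.set) (hy : y ∈ Q.set) : dist x y ≤ Real.sqrt d * Q.l := by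
  rw [EuclideanSpace.dist_eq]
  have hbound : ∀ i : Fin d, dist (x i) (y i) ^ 2 ≤ Q.l ^ 2 := by
    intro i
    obtain ⟨a1, b1⟩ := hx i; obtain ⟨a2, b2⟩ := hy i
    have h1 : |x i - y i| ≤ Q.l := by
      rw [abs_le]; constructor <;> linarith
    rw [Real.dist_eq]
    nlinarith [abs_nonneg (x i - y i)]
  calc Real.sqrt (∑ i, dist (x i) (y i) ^ 2) ≤ Real.sqrt (∑ _i : Fin d, Q.l ^ 2) :=
      Real.sqrt_le_sqrt (Finset.sum_le_sum fun i _ => hbound i)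
  _ = Real.sqrt (d * Q.l ^ 2) := by rw [Finset.sum_const]; simp [nsmul_eq_mul]
  _ = Real.sqrt d * Q.l := by
      rw [Real.sqrt_mul (Nat.cast_nonneg d), Real.sqrt_sq Q.l_pos.le]

/-- countability of dyadic subcubes -/
lemma countable_dyadic (R : Cube d) : {Q : Cube d | IsDyadicSubcube R Q}.Countable := by
  have : {Q : Cube d | IsDyadicSubcube R Q} ⊆
      Set.range (fun p : ℕ × (Fin d → ℕ) => dy R p.1 p.2) := by
    rintro Q hQ
    obtain ⟨j, k, _, rfl⟩ := isDyadic_iff.1 hQ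
    exact ⟨(j, k), rfl⟩
  exact (Set.countable_range _).mono this

/-- existence of a maximal empty cube through a point off the closure -/
lemma exists_maxEmpty {E : Set (EuclideanSpace ℝ (Fin d))} (hE : E.Nonempty) {R Q : Cube d}
    (hQdy : IsDyadicSubcube R Q) (hQE : (Q.set ∩ E).Nonempty)
    {x : EuclideanSpace ℝ (Fin d)} (hx : x ∈ Q.set) (hxE : x ∉ closure E) :
    ∃ Q' : Cube d, IsMaxEmpty R E Q' ∧ x ∈ Q'.set ∧ Q'.set ⊆ Q.set := by
  obtain ⟨jQ, kQ, hkQ, rfl⟩ := isDyadic_iff.1 hQdy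
  have hxR : x ∈ R.set := dy_subset_R hkQ hx
  set r := Metric.infDist x E with hr
  have hrpos : 0 < r := by
    have h1 := (isClosed_closure.notMem_iff_infDist_pos hE.closure (x := x)).1 hxE
    rwa [Metric.infDist_closure] at h1
  -- choose a deep level whose cube around x avoids E
  have hhalf : (1/2 : ℝ) < 1 := by norm_num
  obtain ⟨n, hn⟩ := exists_pow_lt_of_lt_one
    ((div_pos hrpos (mul_pos (by positivity) R.l_pos)) :
      (0:ℝ) < r / ((Real.sqrt d + 1) * R.l)) hhalf
  set j := max n jQ with hj
  have hsmall : Real.sqrt d * (R.l / 2 ^ j) < r := by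
    have h1 : ((1:ℝ)/2) ^ j ≤ (1/2) ^ n := pow_le_pow_of_le_one (by norm_num) (by norm_num) (le_max_left n jQ)
    have h2 : ((1:ℝ)/2) ^ j < r / ((Real.sqrt d + 1) * R.l) := h1.trans_lt hn
    have h3 : R.l / 2 ^ j = R.l * (1/2) ^ j := by
      rw [div_pow, one_pow]; field_simp
    have hs : (0:ℝ) ≤ Real.sqrt d := Real.sqrt_nonneg d
    have h4 : R.l * ((1:ℝ)/2) ^ j < r / (Real.sqrt d + 1) := by
      rw [div_mul_eq_div_div] at h2
      have := (mul_lt_mul_of_pos_left h2 R.l_pos)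
      calc R.l * ((1:ℝ)/2) ^ j < R.l * (r / (Real.sqrt d + 1) / R.l) := this
      _ = r / (Real.sqrt d + 1) := by
          rw [mul_comm]; exact div_mul_cancel₀ _ R.l_pos.ne'
    rw [h3]
    have h5 : Real.sqrt d * (R.l * (1/2) ^ j) < Real.sqrt d * (r / (Real.sqrt d + 1)) ∨
        Real.sqrt d = 0 := by
      rcases eq_or_lt_of_le hs with h | h
      · right; exact h.symm
      · left; exact mul_lt_mul_of_pos_left h4 h
    rcases h5 with h5 | h5
    · calc Real.sqrt d * (R.l * (1/2) ^ j) < Real.sqrt d * (r / (Real.sqrt d + 1)) := h5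
      _ ≤ r := by
          rw [mul_div_assoc']
          rw [div_le_iff₀ (by positivity)]
          nlinarith
    · rw [h5]; simpa using hrpos
  -- the chain of cubes containing x
  have hC : ∀ m, x ∈ (dy R m (kAt R m x)).set ∧ ∀ i, kAt R m x i < 2 ^ m :=
    fun m => ⟨(kAt_spec hxR m).2, (kAt_spec hxR m).1⟩
  have hempty_j : (dy R j (kAt R j x)).set ∩ E = ∅ := by
    rw [Set.eq_empty_iff_forall_notMem]
    rintro y ⟨hy1, hy2⟩
    have hd := dist_le_of_mem_cube (hC j).1 hy1
    rw [dy_l] at hd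
    have : dist x y < r := lt_of_le_of_lt hd hsmall
    exact absurd (Metric.infDist_le_dist_of_mem hy2) (by rw [← hr]; linarith)
  -- minimal empty level above jQ
  have hP : ∃ m, jQ ≤ m ∧ (dy R m (kAt R m x)).set ∩ E = ∅ :=
    ⟨j, le_max_right n jQ, hempty_j⟩
  classical
  set m := Nat.find hP with hm
  obtain ⟨hm1, hm2⟩ := Nat.find_spec hP
  have hkjQ : kAt R jQ x = kQ := dy_eq_of_inter ⟨x, (hC jQ).1, hx⟩
  have hmgt : jQ < m := by
    rcases eq_or_lt_of_le hm1 with h | h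
    · exfalso
      rw [← h, hkjQ] at hm2
      obtain ⟨z, hz⟩ := hQE
      rw [Set.eq_empty_iff_forall_notMem] at hm2
      exact hm2 z hz
    · exact h
  have hm1' : jQ ≤ m - 1 := by omega
  have hnotempty : (dy R (m-1) (kAt R (m-1) x)).set ∩ E ≠ ∅ := by
    intro hcon
    exact Nat.find_min hP (by omega : m - 1 < m) ⟨hm1', hcon⟩
  refine ⟨dy R m (kAt R m x), ⟨dy_isDyadic (hC m).2, hm2,
    dy R (m-1) (kAt R (m-1) x), dy_isDyadic (hC (m-1)).2, ?_, ?_, ?_⟩, (hC m).1, ?_⟩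
  · rw [dy_l, dy_l]
    have h2 : (2:ℝ) ^ m = 2 * 2 ^ (m - 1) := by
      rw [← pow_succ']
      congr 1
      omega
    rw [h2]
    field_simp
  · exact dy_nested (by omega) ⟨x, (hC (m-1)).1, (hC m).1⟩
  · exact Set.nonempty_iff_ne_empty.2 hnotempty
  · rw [← hkjQ]
    exact dy_nested hm1 ⟨x, (hC jQ).1, (hC m).1⟩

/-- distinct maximal empty cubes are disjoint -/
lemma maxEmpty_disjoint {E : Set (EuclideanSpace ℝ (Fin d))} {R Q1 Q2 : Cube d}
    (h1 : IsMaxEmpty R E Q1) (h2 : IsMaxEmpty R E Q2) (hne : Q1 ≠ Q2) :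
    Disjoint Q1.set Q2.set := by
  rw [Set.disjoint_iff_inter_eq_empty]
  by_contra hcon
  have hint : (Q1.set ∩ Q2.set).Nonempty := Set.nonempty_iff_ne_empty.2 hcon
  -- wlog setup
  suffices H : ∀ (Q1 Q2 : Cube d), IsMaxEmpty R E Q1 → IsMaxEmpty R E Q2 → Q1 ≠ Q2 →
      (Q1.set ∩ Q2.set).Nonempty → ∀ j1 k1 j2 k2, (∀ i, k1 i < 2^j1) → (∀ i, k2 i < 2^j2) →
      Q1 = dy R j1 k1 → Q2 = dy R j2 k2 → j1 ≤ j2 → False by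
    obtain ⟨j1, k1, hk1, hQ1⟩ := isDyadic_iff.1 h1.1
    obtain ⟨j2, k2, hk2, hQ2⟩ := isDyadic_iff.1 h2.1
    rcases le_total j1 j2 with h | h
    · exact H Q1 Q2 h1 h2 hne hint j1 k1 j2 k2 hk1 hk2 hQ1 hQ2 h
    · exact H Q2 Q1 h2 h1 hne.symm (by rwa [Set.inter_comm] at hint) j2 k2 j1 k1 hk2 hk1 hQ2 hQ1 h
  rintro Q1 Q2 h1 h2 hne hint j1 k1 j2 k2 hk1 hk2 rfl rfl hj
  rcases eq_or_lt_of_le hj with heq | hlt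
  · subst heq
    exact hne (by rw [dy_eq_of_inter hint])
  · -- parent of Q2 is contained in Q1 and meets E
    obtain ⟨_, hQ1E, _⟩ := h1
    obtain ⟨_, _, P, hPdy, hPl, hPsub, hPE⟩ := h2
    obtain ⟨jP, kP, hkP, hPeq⟩ := isDyadic_iff.1 hPdy
    have hjP : jP = j2 - 1 := by
      have : P.l = R.l / 2 ^ jP := by rw [hPeq]; rfl
      rw [hPl, dy_l] at this
      have h2' : (2:ℝ) * (R.l / 2 ^ j2) = R.l / 2 ^ (j2 - 1) := by
        have hp : (2:ℝ) ^ j2 = 2 * 2 ^ (j2 - 1) := by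
          rw [← pow_succ']; congr 1; omega
        rw [hp]; field_simp
      rw [h2'] at this
      exact level_unique this.symm
    obtain ⟨z, hz1, hz2⟩ := hint
    have hzP : z ∈ P.set := hPsub hz2
    have hPsubQ1 : P.set ⊆ (dy R j1 k1).set := by
      rw [hPeq]
      apply dy_nested (by omega)
      exact ⟨z, hz1, by rw [← hPeq]; exact hzP⟩
    obtain ⟨w, hw1, hw2⟩ := hPE
    have : w ∈ (dy R j1 k1).set ∩ E := ⟨hPsubQ1 hw1, hw2⟩
    rw [hQ1E] at this
    exact this

lemma level_le_level_iff {R : Cube d} {j j' : ℕ} : R.l / 2 ^ j ≤ R.l / 2 ^ j' ↔ j' ≤ j := by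
  rw [div_le_div_iff₀ (by positivity) (by positivity)]
  constructor
  · intro h
    have h2 : (2:ℝ) ^ j' ≤ 2 ^ j := by nlinarith [R.l_pos]
    have h3 : (2:ℕ) ^ j' ≤ 2 ^ j := by exact_mod_cast h2
    by_contra hc
    push_neg at hc
    have h4 : (2:ℕ) ^ j < 2 ^ j' := Nat.pow_lt_pow_right (by norm_num) hc
    omega
  · intro h
    have h2 : (2:ℝ) ^ j' ≤ 2 ^ j := by
      have h3 : (2:ℕ) ^ j' ≤ 2 ^ j := Nat.pow_le_pow_right (by norm_num) h
      exact_mod_cast h3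
    nlinarith [R.l_pos]

open Classical in
noncomputable def levOf (R Q : Cube d) : ℕ :=
  if h : IsDyadicSubcube R Q then h.choose else 0

lemma levOf_eq_dy {R Q : Cube d} (h : IsDyadicSubcube R Q) :
    ∃ k, (∀ i, k i < 2 ^ levOf R Q) ∧ Q = dy R (levOf R Q) k := by
  have e : levOf R Q = h.choose := by simp only [levOf]; exact dif_pos h
  rw [e]
  obtain ⟨k, hk, hl, ha⟩ := h.choose_spec
  exact ⟨k, hk, Cube.ext' (funext ha) hl⟩

lemma levOf_l {R Q : Cube d} (h : IsDyadicSubcube R Q) : Q.l = R.l / 2 ^ levOf R Q := by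
  obtain ⟨k, _, hQ⟩ := levOf_eq_dy h
  conv_lhs => rw [hQ]
  rfl

lemma levOf_unique {R Q : Cube d} (h : IsDyadicSubcube R Q) {j : ℕ}
    (hj : Q.l = R.l / 2 ^ j) : levOf R Q = j :=
  level_unique (by rw [← levOf_l h, hj])

open MeasureTheory Classical in
lemma decomp {E : Set (EuclideanSpace ℝ (Fin d))} (hE : E.Nonempty)
    (hE0 : volume (closure E) = 0) {R Q : Cube d} (hQdy : IsDyadicSubcube R Q)
    (hQE : (Q.set ∩ E).Nonempty) :
    volume Q.set = ∑' Q' : {Q' : Cube d // IsMaxEmpty R E Q'},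
      (if Q'.1.set ⊆ Q.set then volume Q'.1.set else 0) := by
  classical
  haveI : Countable {Q' : Cube d // IsMaxEmpty R E Q'} :=
    Set.Countable.to_subtype ((countable_dyadic R).mono (fun Q' hQ' => hQ'.1))
  set g : {Q' : Cube d // IsMaxEmpty R E Q'} → Set (EuclideanSpace ℝ (Fin d)) :=
    fun Q' => if Q'.1.set ⊆ Q.set then Q'.1.set else ∅ with hg
  have hmeas : ∀ Q', MeasurableSet (g Q') := by
    intro Q'; by_cases h : Q'.1.set ⊆ Q.set <;> simp [hg, h, meas_cube]
  have hdisj : Pairwise (Function.onFun Disjoint g) := by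
    intro Q1 Q2 hne
    have hne' : Q1.1 ≠ Q2.1 := fun h => hne (Subtype.ext h)
    have hd := maxEmpty_disjoint Q1.2 Q2.2 hne'
    by_cases h1 : Q1.1.set ⊆ Q.set <;> by_cases h2 : Q2.1.set ⊆ Q.set <;>
      simp [Function.onFun, hg, h1, h2, hd]
  have hsub : (⋃ Q', g Q') ⊆ Q.set := by
    intro y hy; simp only [Set.mem_iUnion] at hy
    obtain ⟨Q', hy⟩ := hy
    by_cases h : Q'.1.set ⊆ Q.set
    · rw [hg] at hy; simp only [h, if_true] at hy; exact h hy
    · rw [hg] at hy; simp [h] at hy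
  have hcover : Q.set ⊆ closure E ∪ ⋃ Q', g Q' := by
    intro y hy
    by_cases hyc : y ∈ closure E
    · exact Or.inl hyc
    · obtain ⟨Q', hQ', hyQ', hsubQ⟩ := exists_maxEmpty hE hQdy hQE hy hyc
      refine Or.inr (Set.mem_iUnion.2 ⟨⟨Q', hQ'⟩, ?_⟩)
      simp [hg, hsubQ, hyQ']
  have hU : volume (⋃ Q', g Q') = ∑' Q', volume (g Q') := measure_iUnion hdisj hmeas
  have hle1 : volume Q.set ≤ ∑' Q', volume (g Q') := by
    calc volume Q.set ≤ volume (closure E ∪ ⋃ Q', g Q') := measure_mono hcover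
    _ ≤ volume (closure E) + volume (⋃ Q', g Q') := measure_union_le _ _
    _ = ∑' Q', volume (g Q') := by rw [hE0, hU, zero_add]
  have hle2 : ∑' Q', volume (g Q') ≤ volume Q.set := hU.symm.le.trans (measure_mono hsub)
  rw [le_antisymm hle1 hle2]
  apply tsum_congr; intro Q'
  by_cases h : Q'.1.set ⊆ Q.set <;> simp [hg, h]

open MeasureTheory Classical in
lemma count_tsum {E : Set (EuclideanSpace ℝ (Fin d))} (hd : d ≠ 0) {R M : Cube d}
    (hM : IsLargestEmptyDyadic R E M) (Q' : Cube d) (hQ' : IsMaxEmpty R E Q') :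
    ∑' Q : {Q : Cube d // IsDyadicSubcube R Q ∧ (Q.set ∩ E).Nonempty ∧
        volume Q.set ≤ volume M.set},
      (if Q'.set ⊆ Q.1.set then volume Q'.set else 0)
      = ((levOf R Q' - levOf R M : ℕ) : ENNReal) * volume Q'.set := by
  classical
  set jM := levOf R M with hjM
  set j' := levOf R Q' with hj'
  have hQ'l : Q'.l = R.l / 2 ^ j' := levOf_l hQ'.1
  have hMl : M.l = R.l / 2 ^ jM := levOf_l hM.1
  have hjj : jM ≤ j' := by
    have h1 : Q'.l ≤ M.l := hM.2.2 Q' hQ'.1 hQ'.2.1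
    rw [hQ'l, hMl] at h1
    exact level_le_level_iff.1 h1
  obtain ⟨k', hk', hQ'eq⟩ := levOf_eq_dy hQ'.1
  rw [← hj'] at hk' hQ'eq
  -- corner point
  set c : EuclideanSpace ℝ (Fin d) := WithLp.toLp 2 Q'.a with hc
  have hcQ' : c ∈ Q'.set := corner_mem Q'
  have hcR : c ∈ R.set := by
    rw [hQ'eq] at hcQ'
    exact dy_subset_R hk' hcQ'
  -- parent facts
  obtain ⟨hQ'dy, hQ'E, P, hPdy, hPl, hPsub, hPE⟩ := hQ'
  obtain ⟨kP, hkP, hPeq⟩ := levOf_eq_dy hPdy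
  set jP := levOf R P with hjP
  have hPlev : R.l / 2 ^ jP = 2 * (R.l / 2 ^ j') := by
    rw [← levOf_l hPdy, hPl, hQ'l]
  have hj'pos : 1 ≤ j' := by
    by_contra hcon
    push_neg at hcon
    interval_cases j'
    have h1 : R.l / 2 ^ jP ≤ R.l / 2 ^ 0 := level_le_level_iff.2 (Nat.zero_le _)
    rw [hPlev] at h1
    simp at h1
    nlinarith [R.l_pos, (by positivity : (0:ℝ) < 2 ^ jP)]
  have hjPval : jP = j' - 1 := by
    apply level_unique
    rw [hPlev]
    have hp : (2:ℝ) ^ j' = 2 * 2 ^ (j' - 1) := by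
      rw [← pow_succ']; congr 1; omega
    rw [hp]
    field_simp
  set D0 := {Q : Cube d // IsDyadicSubcube R Q ∧ (Q.set ∩ E).Nonempty ∧
      volume Q.set ≤ volume M.set} with hD0
  set S : Set D0 := {Q : D0 | Q'.set ⊆ Q.1.set} with hS
  set v := volume Q'.set with hv
  -- level bounds for members of S
  have hlev_mem : ∀ Q : D0, Q ∈ S → levOf R Q.1 ∈ Finset.Ico jM j' := by
    rintro ⟨Q, hQdy, hQE, hQvol⟩ hQS
    obtain ⟨kQ, hkQ, hQeq⟩ := levOf_eq_dy hQdy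
    refine Finset.mem_Ico.2 ⟨?_, ?_⟩
    · -- volume comparison gives level lower bound
      rw [vol_cube, vol_cube] at hQvol
      have h1 : Q.l ^ d ≤ M.l ^ d := by
        rw [ENNReal.ofReal_le_ofReal_iff (pow_nonneg M.l_pos.le d)] at hQvol
        · exact hQvol
      have h2 : Q.l ≤ M.l := by
        by_contra hcon
        push_neg at hcon
        have := pow_lt_pow_left₀ hcon M.l_pos.le hd
        linarith
      rw [levOf_l hQdy, hMl] at h2
      exact level_le_level_iff.1 h2
    · -- Q strictly coarser than Q'
      by_contra hcon
      push_neg at hcon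
      have hsub2 : Q.set ⊆ Q'.set := by
        rw [hQ'eq, hQeq]
        apply dy_nested hcon
        exact ⟨c, by rw [← hQ'eq]; exact hcQ', by rw [← hQeq]; exact hQS hcQ'⟩
      obtain ⟨z, hz1, hz2⟩ := hQE
      rw [Set.eq_empty_iff_forall_notMem] at hQ'E
      exact hQ'E z ⟨hsub2 hz1, hz2⟩
  -- the inverse construction
  have hinv : ∀ m, m ∈ Finset.Ico jM j' → ∃ hmem : (IsDyadicSubcube R (dy R m (kAt R m c)) ∧
      ((dy R m (kAt R m c)).set ∩ E).Nonempty ∧ volume (dy R m (kAt R m c)).set ≤ volume M.set),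
      Q'.set ⊆ (dy R m (kAt R m c)).set := by
    intro m hm
    obtain ⟨hm1, hm2⟩ := Finset.mem_Ico.1 hm
    have hcm : c ∈ (dy R m (kAt R m c)).set := (kAt_spec hcR m).2
    have hkm : ∀ i, kAt R m c i < 2 ^ m := (kAt_spec hcR m).1
    have hsubQ' : Q'.set ⊆ (dy R m (kAt R m c)).set := by
      rw [hQ'eq]
      exact dy_nested hm2.le ⟨c, hcm, by rw [← hQ'eq]; exact hcQ'⟩
    have hsubP : P.set ⊆ (dy R m (kAt R m c)).set := by
      rw [hPeq]
      refine dy_nested (by omega : m ≤ jP) ⟨c, hcm, ?_⟩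
      rw [← hPeq]
      exact hPsub hcQ'
    refine ⟨⟨dy_isDyadic hkm, ?_, ?_⟩, hsubQ'⟩
    · obtain ⟨w, hw1, hw2⟩ := hPE
      exact ⟨w, hsubP hw1, hw2⟩
    · rw [vol_cube, vol_cube]
      apply ENNReal.ofReal_le_ofReal
      have h1 : (dy R m (kAt R m c)).l ≤ M.l := by
        rw [dy_l, hMl]
        exact level_le_level_iff.2 hm1
      exact pow_le_pow_left₀ (dy R m (kAt R m c)).l_pos.le h1 d
  -- the equivalence
  set e : ↥S ≃ {m // m ∈ Finset.Ico jM j'} :=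
    { toFun := fun Q => ⟨levOf R Q.1.1, hlev_mem Q.1 Q.2⟩
      invFun := fun m => ⟨⟨dy R m.1 (kAt R m.1 c), (hinv m.1 m.2).choose⟩,
        (hinv m.1 m.2).choose_spec⟩
      left_inv := by
        rintro ⟨⟨Q, hQmem⟩, hQS⟩
        apply Subtype.ext
        apply Subtype.ext
        obtain ⟨kQ, hkQ, hQeq⟩ := levOf_eq_dy hQmem.1
        have hcQ : c ∈ Q.set := hQS hcQ'
        have : kAt R (levOf R Q) c = kQ := by
          apply dy_eq_of_inter
          exact ⟨c, (kAt_spec hcR (levOf R Q)).2, by rw [← hQeq]; exact hcQ⟩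
        show dy R (levOf R Q) (kAt R (levOf R Q) c) = Q
        rw [this, ← hQeq]
      right_inv := by
        rintro ⟨m, hm⟩
        apply Subtype.ext
        show levOf R (dy R m (kAt R m c)) = m
        exact levOf_unique (dy_isDyadic (kAt_spec hcR m).1) (dy_l R m _) }
  -- compute the tsum
  have key : ∀ Q : D0, (if Q'.set ⊆ Q.1.set then v else 0)
      = S.indicator (fun _ => v) Q := by
    intro Q
    rw [Set.indicator_apply]
    rfl
  calc ∑' Q : D0, (if Q'.set ⊆ Q.1.set then v else 0)
      = ∑' Q : D0, S.indicator (fun _ => v) Q := tsum_congr key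
    _ = ∑' _ : ↥S, v := (tsum_subtype S (fun _ => v)).symm
    _ = ∑' _ : {m // m ∈ Finset.Ico jM j'}, v := Equiv.tsum_eq e (fun _ => v)
    _ = ∑ _m ∈ Finset.Ico jM j', v := Finset.tsum_subtype (Finset.Ico jM j') (fun _ => v)
    _ = (j' - jM) • v := by rw [Finset.sum_const, Nat.card_Ico]
    _ = ((j' - jM : ℕ) : ENNReal) * v := by rw [nsmul_eq_mul]

end St15

open St15

/-- ∑_{Q ∈ 𝒟₀(R,E)} |Q| = ∑_{Q' ∈ ℱ(R,E)} |Q'| log₂(ℓ(M(R))/ℓ(Q')). -/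
theorem stmt15 {d : ℕ} (E : Set (EuclideanSpace ℝ (Fin d))) (hE : E.Nonempty)
    (hE0 : volume (closure E) = 0) (R M : Cube d) (hM : IsLargestEmptyDyadic R E M) :
    ∑' Q : {Q : Cube d // IsDyadicSubcube R Q ∧ (Q.set ∩ E).Nonempty ∧
        volume Q.set ≤ volume M.set}, volume Q.1.set
      = ∑' Q' : {Q' : Cube d // IsMaxEmpty R E Q'},
          volume Q'.1.set * ENNReal.ofReal (Real.logb 2 (M.l / Q'.1.l)) := by
  classical
  rcases Nat.eq_zero_or_pos d with hd0 | hd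
  · exfalso
    obtain ⟨p, hp⟩ := hE
    have hpM : p ∈ M.set := by subst hd0; intro i; exact i.elim0
    have h := hM.2.1
    rw [Set.eq_empty_iff_forall_notMem] at h
    exact h p ⟨hpM, hp⟩
  have step1 : ∑' Q : {Q : Cube d // IsDyadicSubcube R Q ∧ (Q.set ∩ E).Nonempty ∧
        volume Q.set ≤ volume M.set}, volume Q.1.set
      = ∑' Q : {Q : Cube d // IsDyadicSubcube R Q ∧ (Q.set ∩ E).Nonempty ∧
        volume Q.set ≤ volume M.set}, ∑' Q' : {Q' : Cube d // IsMaxEmpty R E Q'},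
          (if Q'.1.set ⊆ Q.1.set then volume Q'.1.set else 0) :=
    tsum_congr fun Q => decomp hE hE0 Q.2.1 Q.2.2.1
  rw [step1, ENNReal.tsum_comm]
  apply tsum_congr
  intro Q'
  rw [count_tsum hd.ne' hM Q'.1 Q'.2]
  set jM := levOf R M with hjM
  set j' := levOf R Q'.1 with hj'
  have hjj : jM ≤ j' := by
    have h1 : Q'.1.l ≤ M.l := hM.2.2 Q'.1 Q'.2.1 Q'.2.2.1
    rw [levOf_l Q'.2.1, levOf_l hM.1] at h1
    exact level_le_level_iff.1 h1
  have h2 : (2:ℝ) ^ j' = 2 ^ (j' - jM) * 2 ^ jM := by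
    rw [← pow_add]; congr 1; omega
  have hval : M.l / Q'.1.l = 2 ^ (j' - jM) := by
    rw [levOf_l hM.1, levOf_l Q'.2.1, ← hjM, ← hj']
    rw [eq_comm, eq_div_iff (div_pos R.l_pos (by positivity)).ne']
    rw [mul_div_assoc', div_eq_div_iff (by positivity) (by positivity), h2]
    ring
  have hlog : Real.logb 2 (M.l / Q'.1.l) = ((j' - jM : ℕ) : ℝ) := by
    rw [hval, ← Real.rpow_natCast 2 (j' - jM), Real.logb_rpow (by norm_num)]
    norm_num
  rw [hlog, ENNReal.ofReal_natCast, mul_comm]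
end

section
/- A set E ⊆ ℝ^d is porous if and only if there exists a constant C such that for every cube R ⊆ ℝ^d, ∑_{Q ∈ 𝒟(R,E)} |Q| ≤ C|R|, where 𝒟(R,E) is the family of dyadic subcubes of R intersecting E (Borichev–Nicolau–Thomas characterization in ℝ^d). -/
open MeasureTheory Metric

namespace Stmt19

variable {d : ℕ}

/-- canonical dyadic subcube of `R` at level `j` with offsets `k`. -/
noncomputable def sub (R : Cube d) (j : ℕ) (k : Fin d → ℕ) : Cube d :=
  ⟨fun i => R.a i + (k i : ℝ) * (R.l / 2 ^ j), R.l / 2 ^ j, by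
    have := R.l_pos; positivity⟩

lemma cube_ext {Q Q' : Cube d} (ha : Q.a = Q'.a) (hl : Q.l = Q'.l) : Q = Q' := by
  cases Q; cases Q'; simp_all

lemma isDyadicSubcube_iff {R Q : Cube d} :
    IsDyadicSubcube R Q ↔ ∃ j k, (∀ i, k i < 2 ^ j) ∧ Q = sub R j k := by
  constructor
  · rintro ⟨j, k, hk, hl, ha⟩
    exact ⟨j, k, hk, cube_ext (funext ha) hl⟩
  · rintro ⟨j, k, hk, rfl⟩
    exact ⟨j, k, hk, rfl, fun i => rfl⟩

lemma sub_isDyadicSubcube (R : Cube d) {j : ℕ} {k : Fin d → ℕ} (hk : ∀ i, k i < 2 ^ j) :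
    IsDyadicSubcube R (sub R j k) :=
  ⟨j, k, hk, rfl, fun i => rfl⟩

lemma sub_set_subset {R : Cube d} {j : ℕ} {k : Fin d → ℕ} (hk : ∀ i, k i < 2 ^ j) :
    (sub R j k).set ⊆ R.set := by
  intro x hx i
  have h1 := (hx i).1
  have h2 := (hx i).2
  have hL := R.l_pos
  have hki : (k i : ℝ) + 1 ≤ 2 ^ j := by
    have : (k i : ℝ) + 1 ≤ ((2:ℕ) ^ j : ℕ) := by exact_mod_cast hk i
    simpa using this
  have hpow : (0:ℝ) < 2 ^ j := by positivity
  constructor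
  · have : R.a i ≤ R.a i + (k i : ℝ) * (R.l / 2 ^ j) := by
      have : (0:ℝ) ≤ (k i : ℝ) * (R.l / 2 ^ j) := by positivity
      linarith
    exact le_trans this h1
  · have key : R.a i + (k i : ℝ) * (R.l / 2 ^ j) + R.l / 2 ^ j ≤ R.a i + R.l := by
      have : ((k i : ℝ) + 1) * (R.l / 2 ^ j) ≤ (2 ^ j : ℝ) * (R.l / 2 ^ j) := by
        apply mul_le_mul_of_nonneg_right hki; positivity
      have h2j : (2 ^ j : ℝ) * (R.l / 2 ^ j) = R.l := by field_simp
      nlinarith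
    simp only [sub] at h2
    linarith

lemma sub_sub (R : Cube d) (j s : ℕ) (k t : Fin d → ℕ) :
    sub (sub R j k) s t = sub R (j + s) (fun i => k i * 2 ^ s + t i) := by
  have h2 : (2:ℝ) ^ (j + s) = 2 ^ j * 2 ^ s := by rw [pow_add]
  apply cube_ext
  · funext i
    simp only [sub, h2]
    push_cast
    field_simp
    ring
  · simp only [sub, h2]
    field_simp

lemma sub_l (R : Cube d) (j : ℕ) (k : Fin d → ℕ) : (sub R j k).l = R.l / 2 ^ j := rfl
lemma sub_a (R : Cube d) (j : ℕ) (k : Fin d → ℕ) (i : Fin d) :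
    (sub R j k).a i = R.a i + (k i : ℝ) * (R.l / 2 ^ j) := rfl

lemma sub_inj {R : Cube d} {j j' : ℕ} {k k' : Fin d → ℕ}
    (h : sub R j k = sub R j' k') : j = j' ∧ ∀ i, k i = k' i := by
  have hL := R.l_pos
  have hl : R.l / 2 ^ j = R.l / 2 ^ j' := congrArg Cube.l h
  have hj : j = j' := by
    field_simp at hl
    exact (Nat.pow_right_injective (le_refl 2) (by exact_mod_cast hl)).symm
  subst hj
  refine ⟨rfl, fun i => ?_⟩
  have ha : R.a i + (k i : ℝ) * (R.l / 2 ^ j) = R.a i + (k' i : ℝ) * (R.l / 2 ^ j) :=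
    congrFun (congrArg Cube.a h) i
  have hpos : (0:ℝ) < R.l / 2 ^ j := by positivity
  have : (k i : ℝ) = k' i := by
    have := mul_right_cancel₀ (ne_of_gt hpos) (by linarith : (k i : ℝ) * (R.l / 2 ^ j) = (k' i : ℝ) * (R.l / 2 ^ j))
    exact this
  exact_mod_cast this

/-- volume of a cube -/
lemma volume_set (Q : Cube d) : volume Q.set = ENNReal.ofReal (Q.l ^ d) := by
  have hpre : Q.set = (MeasurableEquiv.toLp 2 (Fin d → ℝ)).symm ⁻¹'
      (Set.univ.pi fun i => Set.Ico (Q.a i) (Q.a i + Q.l)) := by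
    ext x
    simp [Cube.set, Set.mem_pi, MeasurableEquiv.toLp]
    exact Iff.rfl
  rw [hpre, (EuclideanSpace.volume_preserving_symm_measurableEquiv_toLp (Fin d)).measure_preimage
    (MeasurableSet.univ_pi fun i => measurableSet_Ico).nullMeasurableSet]
  rw [volume_pi_pi]
  simp only [Real.volume_Ico, add_sub_cancel_left]
  rw [Finset.prod_const, ← ENNReal.ofReal_pow Q.l_pos.le]
  simp



open Classical in
noncomputable def T (E : Set (EuclideanSpace ℝ (Fin d))) (R : Cube d) (n : ℕ) : ℝ :=
  ∑ k : Fin d → Fin (2 ^ n),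
    if ((sub R n fun i => (k i : ℕ)).set ∩ E).Nonempty then (R.l / 2 ^ n) ^ d else 0

lemma T_nonneg (E : Set (EuclideanSpace ℝ (Fin d))) (R : Cube d) (n : ℕ) : 0 ≤ T E R n := by
  apply Finset.sum_nonneg
  intro k _
  have := R.l_pos
  split <;> positivity

lemma card_fun_fin (n : ℕ) : Fintype.card (Fin d → Fin n) = n ^ d := by
  simp [Fintype.card_fun]

lemma T_le (E : Set (EuclideanSpace ℝ (Fin d))) (R : Cube d) (n : ℕ) :
    T E R n ≤ R.l ^ d := by
  have hL := R.l_pos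
  have h1 : T E R n ≤ ∑ _k : Fin d → Fin (2 ^ n), (R.l / 2 ^ n) ^ d := by
    apply Finset.sum_le_sum
    intro k _
    split
    · exact le_refl _
    · positivity
  refine h1.trans ?_
  rw [Finset.sum_const, Finset.card_univ, card_fun_fin, nsmul_eq_mul]
  push_cast
  rw [← mul_pow, mul_div_cancel₀ _ (by positivity : ((2:ℝ)^n) ≠ 0)]

lemma T_zero {E : Set (EuclideanSpace ℝ (Fin d))} {P : Cube d} (h : P.set ∩ E = ∅) (n : ℕ) :
    T E P n = 0 := by
  apply Finset.sum_eq_zero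
  intro k _
  rw [if_neg]
  intro hne
  have hsub : (sub P n fun i => (k i : ℕ)).set ⊆ P.set := sub_set_subset (fun i => (k i).is_lt)
  obtain ⟨x, hx1, hx2⟩ := hne
  have : x ∈ P.set ∩ E := ⟨hsub hx1, hx2⟩
  rw [h] at this
  exact this


/-- split a level `j+n` index into level `j` and relative level `n` indices -/
def splitEquiv (D j n : ℕ) : (Fin D → Fin (2 ^ j)) × (Fin D → Fin (2 ^ n)) ≃ (Fin D → Fin (2 ^ (j + n))) where
  toFun p := fun i => ⟨(p.1 i : ℕ) * 2 ^ n + (p.2 i : ℕ), by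
    have h1 : ((p.1 i : ℕ) + 1) * 2 ^ n ≤ 2 ^ j * 2 ^ n :=
      Nat.mul_le_mul_right _ (p.1 i).is_lt
    have h2 := (p.2 i).is_lt
    calc (p.1 i : ℕ) * 2 ^ n + (p.2 i : ℕ) < ((p.1 i : ℕ) + 1) * 2 ^ n := by
          rw [add_mul, one_mul]; omega
      _ ≤ 2 ^ j * 2 ^ n := h1
      _ = 2 ^ (j + n) := (pow_add 2 j n).symm⟩
  invFun k := (fun i => ⟨(k i : ℕ) / 2 ^ n, by
      rw [Nat.div_lt_iff_lt_mul (Nat.pow_pos (by norm_num))]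
      exact lt_of_lt_of_le (k i).is_lt (le_of_eq (pow_add 2 j n)), ⟩,
    fun i => ⟨(k i : ℕ) % 2 ^ n, Nat.mod_lt _ (Nat.pow_pos (by norm_num))⟩)
  left_inv p := by
    ext i
    · simp only [Fin.val_mk]
      rw [add_comm, Nat.add_mul_div_right _ _ (Nat.pow_pos (by norm_num)),
        Nat.div_eq_of_lt (p.2 i).is_lt, Nat.zero_add]
    · simp only [Fin.val_mk]
      rw [add_comm, Nat.add_mul_mod_self_right, Nat.mod_eq_of_lt (p.2 i).is_lt]
  right_inv k := by
    funext i
    apply Fin.ext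
    simp only [Fin.val_mk]
    rw [mul_comm, Nat.div_add_mod]

lemma T_comp (E : Set (EuclideanSpace ℝ (Fin d))) (R : Cube d) (j n : ℕ) :
    T E R (j + n) = ∑ k : Fin d → Fin (2 ^ j), T E (sub R j fun i => (k i : ℕ)) n := by
  classical
  unfold T
  rw [← Equiv.sum_comp (splitEquiv d j n)]
  rw [Fintype.sum_prod_type]
  apply Finset.sum_congr rfl
  intro k _
  apply Finset.sum_congr rfl
  intro t _
  have hcube : (sub R (j + n) fun i => ((splitEquiv d j n (k, t)) i : ℕ)) =
      sub (sub R j fun i => (k i : ℕ)) n fun i => (t i : ℕ) := by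
    rw [sub_sub]
    rfl
  have hval : (R.l / 2 ^ (j + n)) ^ d = ((sub R j fun i => (k i : ℕ)).l / 2 ^ n) ^ d := by
    rw [sub_l, div_div, ← pow_add]
  rw [hcube, hval]


lemma contraction {E : Set (EuclideanSpace ℝ (Fin d))} {c : ℝ} (hc : 0 < c) {m : ℕ}
    (hm : 1 ≤ c * 2 ^ m)
    (hP : ∀ R : Cube d, ∃ M : Cube d, IsDyadicSubcube R M ∧ M.set ∩ E = ∅ ∧ c * R.l ≤ M.l)
    (Q : Cube d) : T E Q m ≤ (1 - c ^ d) * Q.l ^ d := by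
  classical
  obtain ⟨M, hMd, hME, hMl⟩ := hP Q
  rw [isDyadicSubcube_iff] at hMd
  obtain ⟨i, κ, hκ, rfl⟩ := hMd
  have hQl := Q.l_pos
  have hMl' : c * Q.l ≤ Q.l / 2 ^ i := hMl
  have hpi : (0:ℝ) < 2 ^ i := by positivity
  have hci : c * 2 ^ i ≤ 1 := by
    have h := mul_le_mul_of_nonneg_right hMl' hpi.le
    rw [div_mul_cancel₀ _ (ne_of_gt hpi)] at h
    nlinarith
  have him : i ≤ m := by
    by_contra hmi
    push_neg at hmi
    have h2 : (2:ℝ) ^ m < 2 ^ i := by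
      apply pow_lt_pow_right₀ (by norm_num) hmi
    nlinarith
  have h2m : 2 ^ i * 2 ^ (m - i) = 2 ^ m := by
    rw [← pow_add, Nat.add_sub_cancel' him]
  -- the injection of empty subcubes
  set A := 2 ^ (m - i) with hA
  have hApos : 0 < A := Nat.pow_pos (by norm_num)
  set φ : (Fin d → Fin A) → (Fin d → Fin (2 ^ m)) := fun t i' =>
    ⟨κ i' * A + (t i' : ℕ), by
      have h1 : (κ i' + 1) * A ≤ 2 ^ i * A := Nat.mul_le_mul_right _ (hκ i')
      have h2 := (t i').is_lt
      calc κ i' * A + (t i' : ℕ) < (κ i' + 1) * A := by rw [add_mul, one_mul]; omega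
        _ ≤ 2 ^ i * A := h1
        _ = 2 ^ m := h2m⟩ with hφ
  have hφinj : Function.Injective φ := by
    intro t t' h
    funext i'
    have := congrFun h i'
    simp only [hφ, Fin.mk.injEq] at this
    exact Fin.ext (by omega)
  have hempty : ∀ t : Fin d → Fin A, ¬ ((sub Q m fun i' => ((φ t) i' : ℕ)).set ∩ E).Nonempty := by
    intro t hne
    have hsub := sub_sub Q i (m - i) κ (fun i' => (t i' : ℕ))
    rw [Nat.add_sub_cancel' him] at hsub
    have hcube : (sub Q m fun i' => ((φ t) i' : ℕ)) =
        sub (sub Q i κ) (m - i) (fun i' => (t i' : ℕ)) := by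
      rw [hsub]
    rw [hcube] at hne
    obtain ⟨x, hx1, hx2⟩ := hne
    have hss : (sub (sub Q i κ) (m - i) fun i' => (t i' : ℕ)).set ⊆ (sub Q i κ).set :=
      sub_set_subset (fun i' => (t i').is_lt)
    have : x ∈ (sub Q i κ).set ∩ E := ⟨hss hx1, hx2⟩
    rw [hME] at this
    exact this
  -- bound the sum
  set v : ℝ := (Q.l / 2 ^ m) ^ d with hv
  have hvnn : 0 ≤ v := by positivity
  have hstep : T E Q m ≤ ((Finset.univ.image φ)ᶜ).card * v := by
    have h1 : T E Q m ≤ ∑ k : Fin d → Fin (2 ^ m), if k ∈ (Finset.univ.image φ)ᶜ then v else 0 := by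
      apply Finset.sum_le_sum
      intro k _
      by_cases hk : k ∈ Finset.univ.image φ
      · obtain ⟨t, _, rfl⟩ := Finset.mem_image.mp hk
        rw [if_neg (hempty t), if_neg (by simpa [Finset.mem_compl] using hk)]
      · rw [if_pos (Finset.mem_compl.mpr hk)]
        split
        · exact le_refl _
        · exact hvnn
    refine h1.trans (le_of_eq ?_)
    rw [Finset.sum_ite_mem, Finset.univ_inter, Finset.sum_const, nsmul_eq_mul]
  have hcard : ((Finset.univ.image φ)ᶜ).card = (2 ^ m) ^ d - A ^ d := by
    rw [Finset.card_compl, Finset.card_image_of_injective _ hφinj, Finset.card_univ,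
      card_fun_fin, card_fun_fin]
  have hle : A ^ d ≤ (2 ^ m) ^ d :=
    Nat.pow_le_pow_left (by rw [← h2m]; exact Nat.le_mul_of_pos_left _ (Nat.pow_pos (by norm_num))) d
  have he1 : ((2:ℝ) ^ m) ^ d * v = Q.l ^ d := by
    rw [hv, ← mul_pow, mul_div_cancel₀ _ (by positivity : ((2:ℝ) ^ m) ≠ 0)]
  have he2 : ((A : ℝ)) ^ d * v = (Q.l / 2 ^ i) ^ d := by
    rw [hv, ← mul_pow]
    congr 1
    have h2mr : (2:ℝ) ^ i * (A:ℝ) = 2 ^ m := by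
      rw [hA]; push_cast; rw [← pow_add, Nat.add_sub_cancel' him]
    field_simp
    nlinarith
  have hpw : c ^ d * Q.l ^ d ≤ (Q.l / 2 ^ i) ^ d := by
    rw [← mul_pow]
    exact pow_le_pow_left₀ (by positivity) hMl' d
  calc T E Q m ≤ ((Finset.univ.image φ)ᶜ).card * v := hstep
    _ = ((2 ^ m) ^ d - A ^ d : ℕ) * v := by rw [hcard]
    _ = ((2:ℝ) ^ m) ^ d * v - (A:ℝ) ^ d * v := by
        rw [Nat.cast_sub hle]; push_cast; ring
    _ = Q.l ^ d - (Q.l / 2 ^ i) ^ d := by rw [he1, he2]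
    _ ≤ (1 - c ^ d) * Q.l ^ d := by nlinarith


lemma T_decay {E : Set (EuclideanSpace ℝ (Fin d))} {c : ℝ} (hc : 0 < c) (hc1 : c ≤ 1) {m : ℕ}
    (hm : 1 ≤ c * 2 ^ m)
    (hP : ∀ R : Cube d, ∃ M : Cube d, IsDyadicSubcube R M ∧ M.set ∩ E = ∅ ∧ c * R.l ≤ M.l)
    (R : Cube d) (n : ℕ) : T E R (n + m) ≤ (1 - c ^ d) * T E R n := by
  classical
  have hρ : 0 ≤ 1 - c ^ d := by
    have : c ^ d ≤ 1 := pow_le_one₀ hc.le hc1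
    linarith
  rw [T_comp E R n m]
  have h1 : ∀ k : Fin d → Fin (2 ^ n), T E (sub R n fun i => (k i : ℕ)) m ≤
      (if ((sub R n fun i => (k i : ℕ)).set ∩ E).Nonempty then (1 - c ^ d) * (R.l / 2 ^ n) ^ d else 0) := by
    intro k
    by_cases hk : ((sub R n fun i => (k i : ℕ)).set ∩ E).Nonempty
    · rw [if_pos hk]
      exact contraction hc hm hP _
    · rw [if_neg hk, T_zero (Set.not_nonempty_iff_eq_empty.mp hk)]
  refine (Finset.sum_le_sum fun k _ => h1 k).trans (le_of_eq ?_)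
  unfold T
  rw [Finset.mul_sum]
  apply Finset.sum_congr rfl
  intro k _
  rw [mul_ite, mul_zero]

lemma T_geom {E : Set (EuclideanSpace ℝ (Fin d))} {c : ℝ} (hc : 0 < c) (hc1 : c ≤ 1) {m : ℕ}
    (hm : 1 ≤ c * 2 ^ m)
    (hP : ∀ R : Cube d, ∃ M : Cube d, IsDyadicSubcube R M ∧ M.set ∩ E = ∅ ∧ c * R.l ≤ M.l)
    (R : Cube d) (n : ℕ) : T E R n ≤ (1 - c ^ d) ^ (n / m) * R.l ^ d := by
  have hρ : 0 ≤ 1 - c ^ d := by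
    have : c ^ d ≤ 1 := pow_le_one₀ hc.le hc1
    linarith
  have key : ∀ q r : ℕ, T E R (q * m + r) ≤ (1 - c ^ d) ^ q * R.l ^ d := by
    intro q
    induction q with
    | zero => intro r; simpa using T_le E R r
    | succ q ih =>
      intro r
      have h1 : (q + 1) * m + r = (q * m + r) + m := by ring
      rw [h1]
      calc T E R ((q * m + r) + m) ≤ (1 - c ^ d) * T E R (q * m + r) := T_decay hc hc1 hm hP R _
        _ ≤ (1 - c ^ d) * ((1 - c ^ d) ^ q * R.l ^ d) := by
            exact mul_le_mul_of_nonneg_left (ih r) hρ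
        _ = (1 - c ^ d) ^ (q + 1) * R.l ^ d := by ring
  have hn : n = (n / m) * m + n % m := (Nat.div_add_mod' n m).symm
  calc T E R n = T E R ((n / m) * m + n % m) := by rw [← hn]
    _ ≤ (1 - c ^ d) ^ (n / m) * R.l ^ d := key _ _


lemma hard_direction {E : Set (EuclideanSpace ℝ (Fin d))} {c : ℝ} (hc : 0 < c) (hc1 : c < 1)
    (hP : ∀ R : Cube d, ∃ M : Cube d, IsDyadicSubcube R M ∧ M.set ∩ E = ∅ ∧ c * R.l ≤ M.l) :
    ∃ C : ℝ, ∀ R : Cube d,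
      ∑' Q : {Q : Cube d // IsDyadicSubcube R Q ∧ (Q.set ∩ E).Nonempty}, volume Q.1.set
        ≤ ENNReal.ofReal C * volume R.set := by
  classical
  obtain ⟨m, hm2⟩ := pow_unbounded_of_one_lt (R := ℝ) (1 / c) (by norm_num : (1:ℝ) < 2)
  have hm : 1 ≤ c * 2 ^ m := by
    rw [div_lt_iff₀ hc] at hm2
    nlinarith
  have hmne : m ≠ 0 := by
    intro h
    rw [h, pow_zero] at hm2
    rw [div_lt_one hc] at hm2
    linarith
  haveI : NeZero m := ⟨hmne⟩
  set ρ : ℝ := 1 - c ^ d with hρdef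
  have hcd : (0:ℝ) < c ^ d := by positivity
  have hρ0 : 0 ≤ ρ := by
    have : c ^ d ≤ 1 := pow_le_one₀ hc.le hc1.le
    simp [hρdef]; linarith
  refine ⟨(m : ℝ) / c ^ d, fun R => ?_⟩
  have hL := R.l_pos
  -- Step 1 : compare the tsum with the level sums
  set g : (Σ j : ℕ, (Fin d → Fin (2 ^ j))) → ENNReal := fun p =>
    if ((sub R p.1 fun i => ((p.2 i : ℕ))).set ∩ E).Nonempty
    then ENNReal.ofReal ((R.l / 2 ^ p.1) ^ d) else 0 with hg
  have hgsum : ∑' p, g p = ∑' j : ℕ, ENNReal.ofReal (T E R j) := by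
    rw [ENNReal.tsum_sigma']
    congr 1
    funext j
    rw [tsum_fintype]
    unfold T
    rw [ENNReal.ofReal_sum_of_nonneg (fun k _ => by split <;> positivity)]
    apply Finset.sum_congr rfl
    intro k _
    rw [hg, apply_ite ENNReal.ofReal, ENNReal.ofReal_zero]
  set ψ : {Q : Cube d // IsDyadicSubcube R Q ∧ (Q.set ∩ E).Nonempty} →
      (Σ j : ℕ, (Fin d → Fin (2 ^ j))) := fun Q =>
    ⟨(isDyadicSubcube_iff.mp Q.2.1).choose,
      fun i => ⟨(isDyadicSubcube_iff.mp Q.2.1).choose_spec.choose i,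
        (isDyadicSubcube_iff.mp Q.2.1).choose_spec.choose_spec.1 i⟩⟩ with hψ
  have hψcube : ∀ Q, sub R (ψ Q).1 (fun i => ((ψ Q).2 i : ℕ)) = Q.1 := by
    intro Q
    have hspec := (isDyadicSubcube_iff.mp Q.2.1).choose_spec.choose_spec.2
    rw [hψ]
    exact hspec.symm
  have hψinj : Function.Injective ψ := by
    intro Q Q' h
    apply Subtype.ext
    rw [← hψcube Q, ← hψcube Q', h]
  have hval : ∀ Q, g (ψ Q) = volume Q.1.set := by
    intro Q
    have hl : R.l / 2 ^ (ψ Q).1 = Q.1.l := by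
      have := congrArg Cube.l (hψcube Q)
      rw [sub_l] at this
      exact this
    rw [hg]
    simp only
    rw [hψcube Q, if_pos Q.2.2, hl, volume_set]
  have hstep1 : (∑' Q : {Q : Cube d // IsDyadicSubcube R Q ∧ (Q.set ∩ E).Nonempty},
      volume Q.1.set) ≤ ∑' j : ℕ, ENNReal.ofReal (T E R j) := by
    calc (∑' Q : {Q : Cube d // IsDyadicSubcube R Q ∧ (Q.set ∩ E).Nonempty}, volume Q.1.set)
        = ∑' Q, g (ψ Q) := tsum_congr (fun Q => (hval Q).symm)
      _ ≤ ∑' p, g p := ENNReal.tsum_comp_le_tsum_of_injective hψinj g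
      _ = ∑' j : ℕ, ENNReal.ofReal (T E R j) := hgsum
  -- Step 2 : geometric bound per level
  have hstep2 : ∀ j : ℕ, ENNReal.ofReal (T E R j) ≤
      ENNReal.ofReal ρ ^ (j / m) * ENNReal.ofReal (R.l ^ d) := by
    intro j
    calc ENNReal.ofReal (T E R j) ≤ ENNReal.ofReal (ρ ^ (j / m) * R.l ^ d) :=
        ENNReal.ofReal_le_ofReal (T_geom hc hc1.le hm hP R j)
      _ = ENNReal.ofReal ρ ^ (j / m) * ENNReal.ofReal (R.l ^ d) := by
        rw [ENNReal.ofReal_mul (by positivity), ENNReal.ofReal_pow hρ0]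
  -- Step 3 : sum the geometric series
  have hone : (1 : ENNReal) - ENNReal.ofReal ρ = ENNReal.ofReal (c ^ d) := by
    rw [← ENNReal.ofReal_one, ← ENNReal.ofReal_sub _ hρ0]
    congr 1
    simp [hρdef]
  have hdm : ∀ p : ℕ × Fin m, ((Nat.divModEquiv m).symm p : ℕ) / m = p.1 := by
    intro p
    simp only [Nat.divModEquiv_symm_apply]
    rw [mul_comm, Nat.mul_add_div (Nat.pos_of_ne_zero hmne), Nat.div_eq_of_lt p.2.is_lt, add_zero]
  have hstep3 : ∑' j : ℕ, ENNReal.ofReal ρ ^ (j / m) =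
      (m : ENNReal) * (ENNReal.ofReal (c ^ d))⁻¹ := by
    set r := ENNReal.ofReal ρ with hr
    have he := ((Nat.divModEquiv m).symm).tsum_eq (fun j => r ^ (j / m))
    rw [← he]
    calc ∑' p : ℕ × Fin m, r ^ (((Nat.divModEquiv m).symm p : ℕ) / m)
        = ∑' p : ℕ × Fin m, r ^ p.1 := tsum_congr (fun p => by rw [hdm p])
      _ = ∑' q : ℕ, ∑' _t : Fin m, r ^ q := ENNReal.tsum_prod (f := fun a (_ : Fin m) => r ^ a)
      _ = ∑' q : ℕ, (m : ENNReal) * r ^ q := by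
          congr 1
          funext q
          rw [tsum_fintype, Finset.sum_const, Finset.card_univ, Fintype.card_fin, nsmul_eq_mul]
      _ = (m : ENNReal) * ∑' q : ℕ, r ^ q := ENNReal.tsum_mul_left
      _ = (m : ENNReal) * (1 - r)⁻¹ := by rw [ENNReal.tsum_geometric]
      _ = (m : ENNReal) * (ENNReal.ofReal (c ^ d))⁻¹ := by rw [hr, hone]
  calc (∑' Q : {Q : Cube d // IsDyadicSubcube R Q ∧ (Q.set ∩ E).Nonempty}, volume Q.1.set)
      ≤ ∑' j : ℕ, ENNReal.ofReal (T E R j) := hstep1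
    _ ≤ ∑' j : ℕ, ENNReal.ofReal ρ ^ (j / m) * ENNReal.ofReal (R.l ^ d) :=
        ENNReal.tsum_le_tsum hstep2
    _ = (∑' j : ℕ, ENNReal.ofReal ρ ^ (j / m)) * ENNReal.ofReal (R.l ^ d) :=
        ENNReal.tsum_mul_right
    _ = ((m : ENNReal) * (ENNReal.ofReal (c ^ d))⁻¹) * ENNReal.ofReal (R.l ^ d) := by
        rw [hstep3]
    _ = ENNReal.ofReal ((m : ℝ) / c ^ d) * volume R.set := by
        rw [volume_set, ENNReal.ofReal_div_of_pos hcd, ENNReal.ofReal_natCast, div_eq_mul_inv]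


lemma easy_direction {E : Set (EuclideanSpace ℝ (Fin d))} {C : ℝ}
    (hC : ∀ R : Cube d,
      ∑' Q : {Q : Cube d // IsDyadicSubcube R Q ∧ (Q.set ∩ E).Nonempty}, volume Q.1.set
        ≤ ENNReal.ofReal C * volume R.set) :
    ∃ c : ℝ, 0 < c ∧ c < 1 ∧ ∀ R : Cube d, ∃ M : Cube d,
      IsDyadicSubcube R M ∧ M.set ∩ E = ∅ ∧ c * R.l ≤ M.l := by
  classical
  set n : ℕ := ⌈max C 0⌉₊ + 1 with hn
  refine ⟨1 / 2 ^ n, by positivity, ?_, ?_⟩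
  · rw [div_lt_one (by positivity)]
    exact one_lt_pow₀ one_lt_two (by omega)
  intro R
  by_contra hcon
  push_neg at hcon
  have hL := R.l_pos
  have hmeet : ∀ (j : Fin n) (k : Fin d → Fin (2 ^ (j : ℕ))),
      ((sub R (j : ℕ) fun i => (k i : ℕ)).set ∩ E).Nonempty := by
    intro j k
    by_contra hne
    have hem : (sub R (j : ℕ) fun i => (k i : ℕ)).set ∩ E = ∅ :=
      Set.not_nonempty_iff_eq_empty.mp hne
    have hlt := hcon _ (sub_isDyadicSubcube R fun i => (k i).is_lt) hem
    rw [sub_l] at hlt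
    have h1 : (2:ℝ) ^ (j : ℕ) ≤ 2 ^ n := pow_le_pow_right₀ one_le_two (le_of_lt j.is_lt)
    have h2 : R.l / 2 ^ n ≤ R.l / 2 ^ (j : ℕ) :=
      div_le_div_of_nonneg_left hL.le (by positivity) h1
    rw [div_mul_eq_mul_div, one_mul] at hlt
    linarith
  set χ : (Σ j : Fin n, (Fin d → Fin (2 ^ (j : ℕ)))) →
      {Q : Cube d // IsDyadicSubcube R Q ∧ (Q.set ∩ E).Nonempty} := fun p =>
    ⟨sub R (p.1 : ℕ) fun i => (p.2 i : ℕ),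
      sub_isDyadicSubcube R fun i => (p.2 i).is_lt, hmeet p.1 p.2⟩ with hχ
  have hχinj : Function.Injective χ := by
    rintro ⟨j, k⟩ ⟨j', k'⟩ h
    have h2 : (sub R (j : ℕ) fun i => (k i : ℕ)) = sub R (j' : ℕ) fun i => (k' i : ℕ) :=
      congrArg Subtype.val h
    obtain ⟨hj, hk⟩ := sub_inj h2
    have hjj : j = j' := Fin.ext hj
    subst hjj
    congr
    funext i
    exact Fin.ext (hk i)
  have key : (∑' p : (Σ j : Fin n, (Fin d → Fin (2 ^ (j : ℕ)))), volume ((χ p).1 : Cube d).set)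
      = (n : ENNReal) * ENNReal.ofReal (R.l ^ d) := by
    rw [tsum_fintype]
    calc ∑ p : (Σ j : Fin n, (Fin d → Fin (2 ^ (j : ℕ)))), volume ((χ p).1 : Cube d).set
        = ∑ j : Fin n, ∑ k : Fin d → Fin (2 ^ (j : ℕ)),
            ENNReal.ofReal ((R.l / 2 ^ (j : ℕ)) ^ d) := by
          rw [← Finset.univ_sigma_univ, Finset.sum_sigma]
          exact Finset.sum_congr rfl fun j _ => Finset.sum_congr rfl fun k _ => volume_set _
      _ = ∑ _j : Fin n, ENNReal.ofReal (R.l ^ d) := by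
          apply Finset.sum_congr rfl
          intro j _
          rw [Finset.sum_const, Finset.card_univ, card_fun_fin, nsmul_eq_mul,
            ← ENNReal.ofReal_natCast, ← ENNReal.ofReal_mul (by positivity)]
          congr 1
          push_cast
          rw [← mul_pow, mul_div_cancel₀ _ (by positivity : ((2:ℝ) ^ (j:ℕ)) ≠ 0)]
      _ = (n : ENNReal) * ENNReal.ofReal (R.l ^ d) := by
          rw [Finset.sum_const, Finset.card_univ, Fintype.card_fin, nsmul_eq_mul]
  have hfin : (n : ENNReal) * ENNReal.ofReal (R.l ^ d) ≤
      ENNReal.ofReal C * ENNReal.ofReal (R.l ^ d) := by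
    calc (n : ENNReal) * ENNReal.ofReal (R.l ^ d)
        = ∑' p : (Σ j : Fin n, (Fin d → Fin (2 ^ (j : ℕ)))), volume ((χ p).1 : Cube d).set :=
          key.symm
      _ ≤ ∑' Q : {Q : Cube d // IsDyadicSubcube R Q ∧ (Q.set ∩ E).Nonempty}, volume Q.1.set :=
          ENNReal.tsum_comp_le_tsum_of_injective hχinj fun Q => volume (Q.1 : Cube d).set
      _ ≤ ENNReal.ofReal C * volume R.set := hC R
      _ = ENNReal.ofReal C * ENNReal.ofReal (R.l ^ d) := by rw [volume_set]
  have hv0 : ENNReal.ofReal (R.l ^ d) ≠ 0 := by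
    rw [ne_eq, ENNReal.ofReal_eq_zero, not_le]
    positivity
  rw [ENNReal.mul_le_mul_iff_left hv0 ENNReal.ofReal_ne_top] at hfin
  have hle : (n : ℝ) ≤ max C 0 := by
    rw [← ENNReal.ofReal_natCast n] at hfin
    have h3 := hfin.trans (ENNReal.ofReal_le_ofReal (le_max_left C 0))
    rwa [ENNReal.ofReal_le_ofReal_iff (le_max_right _ _)] at h3
  have hgt : max C 0 < (n : ℝ) := by
    have h4 := Nat.le_ceil (max C 0)
    have h5 : (⌈max C 0⌉₊ : ℝ) < n := by exact_mod_cast Nat.lt_succ_self _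
    linarith
  linarith

end Stmt19


/-- Borichev–Nicolau–Thomas in ℝ^d: E is porous iff
∑_{Q ∈ 𝒟(R,E)} |Q| ≤ C|R| for all cubes R. -/
theorem stmt19 {d : ℕ} (E : Set (EuclideanSpace ℝ (Fin d))) :
    (∃ c : ℝ, 0 < c ∧ c < 1 ∧ ∀ R : Cube d, ∃ M : Cube d,
        IsDyadicSubcube R M ∧ M.set ∩ E = ∅ ∧ c * R.l ≤ M.l) ↔
      ∃ C : ℝ, ∀ R : Cube d,
        ∑' Q : {Q : Cube d // IsDyadicSubcube R Q ∧ (Q.set ∩ E).Nonempty}, volume Q.1.set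
          ≤ ENNReal.ofReal C * volume R.set := by
  constructor
  · rintro ⟨c, hc, hc1, hP⟩
    exact Stmt19.hard_direction hc hc1 hP
  · rintro ⟨C, hC⟩
    exact Stmt19.easy_direction hC
end
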